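/- arXiv:1107.5662 — 7 statements merged into one kernel-verified Lean document; each statement's English description precedes it below -/
import Mathlib

section
/- For any γ > 0 and any real numbers s, t with t > s > 1/√(2γ), the integral ∫_s^t e^{γu²} du satisfies (e^{γt²}/(2γt))·(1 − e^{−γ(t²−s²)/2}) ≤ ∫_s^t e^{γu²} du ≤ (e^{γt²}/(2γt))·(2γs²/(2γs² − 1)). -/
/-- Lemma (exp-integral bounds, growing case): for `γ > 0` and `t > s > 1/√(2γ)`,
`(e^{γt²}/(2γt))·(1 − e^{−γ(t²−s²)/2}) ≤ ∫_s^t e^{γu²} du ≤ (e^{γt²}/(2γt))·(2γs²/(2γs²−1))`. -/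
theorem stmt_0 (γ s t : ℝ) (hγ : 0 < γ) (hs : 1 / Real.sqrt (2 * γ) < s) (hst : s < t) :
    Real.exp (γ * t ^ 2) / (2 * γ * t) * (1 - Real.exp (-γ * (t ^ 2 - s ^ 2) / 2))
      ≤ (∫ u in s..t, Real.exp (γ * u ^ 2)) ∧
    (∫ u in s..t, Real.exp (γ * u ^ 2))
      ≤ Real.exp (γ * t ^ 2) / (2 * γ * t) * (2 * γ * s ^ 2 / (2 * γ * s ^ 2 - 1)) := by
  have h2γ : (0:ℝ) < 2 * γ := by linarith
  have hsq : 0 < Real.sqrt (2 * γ) := Real.sqrt_pos.2 h2γ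
  have hs0 : 0 < s := lt_trans (by positivity) hs
  have ht0 : 0 < t := lt_trans hs0 hst
  have hr : Real.sqrt (2 * γ) ^ 2 = 2 * γ := Real.sq_sqrt h2γ.le
  have hmul : 1 < s * Real.sqrt (2 * γ) := (div_lt_iff₀ hsq).1 hs
  have hkey : 1 < 2 * γ * s ^ 2 := by nlinarith [hmul, hr, hsq.le]
  have hIcc : Set.uIcc s t = Set.Icc s t := Set.uIcc_of_le hst.le
  have hcont_exp : Continuous fun u : ℝ => Real.exp (γ * u ^ 2) := by fun_prop
  -- derivative facts
  have hderiv_inner : ∀ u : ℝ, HasDerivAt (fun u : ℝ => γ * u ^ 2) (γ * (2 * u)) u := by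
    intro u
    simpa using (hasDerivAt_pow 2 u).const_mul γ
  -- ### Lower bound ###
  have hG : ∀ u ∈ Set.uIcc s t,
      HasDerivAt (fun u : ℝ => Real.exp (γ * u ^ 2) / (2 * γ * t))
        (Real.exp (γ * u ^ 2) * u / t) u := by
    intro u _
    have h2 := ((hderiv_inner u).exp).div_const (2 * γ * t)
    refine h2.congr_deriv ?_
    rw [div_eq_div_iff (by positivity) ht0.ne']
    ring
  have hint1 : (∫ u in s..t, Real.exp (γ * u ^ 2) * u / t)
      = Real.exp (γ * t ^ 2) / (2 * γ * t) - Real.exp (γ * s ^ 2) / (2 * γ * t) := by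
    apply intervalIntegral.integral_eq_sub_of_hasDerivAt hG
    exact (Continuous.intervalIntegrable (by fun_prop) _ _)
  have hmono1 : (∫ u in s..t, Real.exp (γ * u ^ 2) * u / t)
      ≤ ∫ u in s..t, Real.exp (γ * u ^ 2) := by
    apply intervalIntegral.integral_mono_on hst.le
      (Continuous.intervalIntegrable (by fun_prop) _ _)
      (hcont_exp.intervalIntegrable _ _)
    intro u hu
    have hu0 : 0 < u := lt_of_lt_of_le hs0 hu.1
    have hut : u / t ≤ 1 := (div_le_one ht0).2 hu.2
    have hE : 0 < Real.exp (γ * u ^ 2) := Real.exp_pos _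
    calc Real.exp (γ * u ^ 2) * u / t = Real.exp (γ * u ^ 2) * (u / t) := by ring
      _ ≤ Real.exp (γ * u ^ 2) * 1 := by
          exact mul_le_mul_of_nonneg_left hut hE.le
      _ = Real.exp (γ * u ^ 2) := mul_one _
  have hle : Real.exp (γ * s ^ 2)
      ≤ Real.exp (γ * t ^ 2) * Real.exp (-γ * (t ^ 2 - s ^ 2) / 2) := by
    rw [← Real.exp_add]
    apply Real.exp_le_exp.2
    have hst2 : s ^ 2 ≤ t ^ 2 := by nlinarith
    have h : γ * s ^ 2 ≤ γ * t ^ 2 := mul_le_mul_of_nonneg_left hst2 hγ.le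
    linarith
  have hlower : Real.exp (γ * t ^ 2) / (2 * γ * t) * (1 - Real.exp (-γ * (t ^ 2 - s ^ 2) / 2))
      ≤ Real.exp (γ * t ^ 2) / (2 * γ * t) - Real.exp (γ * s ^ 2) / (2 * γ * t) := by
    have h2γt : (0:ℝ) < 2 * γ * t := by positivity
    rw [mul_sub, mul_one, div_mul_eq_mul_div]
    gcongr
  -- ### Upper bound ###
  have hF : ∀ u ∈ Set.uIcc s t,
      HasDerivAt (fun u : ℝ => Real.exp (γ * u ^ 2) / (2 * γ * u))
        (Real.exp (γ * u ^ 2) * (1 - 1 / (2 * γ * u ^ 2))) u := by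
    intro u hu
    rw [hIcc] at hu
    have hu0 : 0 < u := lt_of_lt_of_le hs0 hu.1
    have h2 : HasDerivAt (fun u : ℝ => Real.exp (γ * u ^ 2))
        (Real.exp (γ * u ^ 2) * (γ * (2 * u))) u := (hderiv_inner u).exp
    have h3 : HasDerivAt (fun u : ℝ => 2 * γ * u) (2 * γ) u := by
      simpa using (hasDerivAt_id u).const_mul (2 * γ)
    have h4 := h2.div h3 (by positivity)
    refine h4.congr_deriv ?_
    have hγ0 : γ ≠ 0 := hγ.ne'
    have hu0' : u ≠ 0 := hu0.ne'
    field_simp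
  have hcontF : ContinuousOn (fun u : ℝ => Real.exp (γ * u ^ 2) * (1 - 1 / (2 * γ * u ^ 2)))
      (Set.uIcc s t) := by
    apply (hcont_exp.continuousOn).mul
    apply ContinuousOn.sub continuousOn_const
    apply ContinuousOn.div continuousOn_const (by fun_prop)
    intro u hu
    rw [hIcc] at hu
    have hu0 : 0 < u := lt_of_lt_of_le hs0 hu.1
    positivity
  have hint2 : (∫ u in s..t, Real.exp (γ * u ^ 2) * (1 - 1 / (2 * γ * u ^ 2)))
      = Real.exp (γ * t ^ 2) / (2 * γ * t) - Real.exp (γ * s ^ 2) / (2 * γ * s) := by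
    apply intervalIntegral.integral_eq_sub_of_hasDerivAt hF
    exact hcontF.intervalIntegrable
  set c : ℝ := 2 * γ * s ^ 2 / (2 * γ * s ^ 2 - 1) with hc
  have hd : (0:ℝ) < 2 * γ * s ^ 2 - 1 := by linarith
  have hc0 : 0 < c := by positivity
  have hmono2 : (∫ u in s..t, Real.exp (γ * u ^ 2))
      ≤ ∫ u in s..t, c * (Real.exp (γ * u ^ 2) * (1 - 1 / (2 * γ * u ^ 2))) := by
    apply intervalIntegral.integral_mono_on hst.le
      (hcont_exp.intervalIntegrable _ _)
      ((continuousOn_const.mul hcontF).intervalIntegrable)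
    intro u hu
    have hu0 : 0 < u := lt_of_lt_of_le hs0 hu.1
    have hsu : s ^ 2 ≤ u ^ 2 := pow_le_pow_left₀ hs0.le hu.1 2
    have ha : 2 * γ * s ^ 2 ≤ 2 * γ * u ^ 2 := by nlinarith
    have ha1 : 1 < 2 * γ * u ^ 2 := lt_of_lt_of_le hkey ha
    have hE : 0 < Real.exp (γ * u ^ 2) := Real.exp_pos _
    have hrw : c * (Real.exp (γ * u ^ 2) * (1 - 1 / (2 * γ * u ^ 2)))
        = Real.exp (γ * u ^ 2) * ((2 * γ * s ^ 2 * (2 * γ * u ^ 2 - 1))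
            / ((2 * γ * s ^ 2 - 1) * (2 * γ * u ^ 2))) := by
      rw [hc]
      field_simp
    show Real.exp (γ * u ^ 2) ≤ c * (Real.exp (γ * u ^ 2) * (1 - 1 / (2 * γ * u ^ 2)))
    rw [hrw]
    have hX : 1 ≤ (2 * γ * s ^ 2 * (2 * γ * u ^ 2 - 1))
        / ((2 * γ * s ^ 2 - 1) * (2 * γ * u ^ 2)) := by
      rw [le_div_iff₀ (by positivity)]
      nlinarith
    nth_rewrite 1 [← mul_one (Real.exp (γ * u ^ 2))]
    exact mul_le_mul_of_nonneg_left hX hE.le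
  have hint3 : (∫ u in s..t, c * (Real.exp (γ * u ^ 2) * (1 - 1 / (2 * γ * u ^ 2))))
      = c * (Real.exp (γ * t ^ 2) / (2 * γ * t) - Real.exp (γ * s ^ 2) / (2 * γ * s)) := by
    rw [intervalIntegral.integral_const_mul, hint2]
  have hFs : 0 ≤ Real.exp (γ * s ^ 2) / (2 * γ * s) := by positivity
  constructor
  · calc Real.exp (γ * t ^ 2) / (2 * γ * t) * (1 - Real.exp (-γ * (t ^ 2 - s ^ 2) / 2))
        ≤ Real.exp (γ * t ^ 2) / (2 * γ * t) - Real.exp (γ * s ^ 2) / (2 * γ * t) := hlower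
      _ = ∫ u in s..t, Real.exp (γ * u ^ 2) * u / t := hint1.symm
      _ ≤ ∫ u in s..t, Real.exp (γ * u ^ 2) := hmono1
  · calc (∫ u in s..t, Real.exp (γ * u ^ 2))
        ≤ ∫ u in s..t, c * (Real.exp (γ * u ^ 2) * (1 - 1 / (2 * γ * u ^ 2))) := hmono2
      _ = c * (Real.exp (γ * t ^ 2) / (2 * γ * t) - Real.exp (γ * s ^ 2) / (2 * γ * s)) := hint3
      _ ≤ c * (Real.exp (γ * t ^ 2) / (2 * γ * t)) := by
          apply mul_le_mul_of_nonneg_left _ hc0.le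
          linarith
      _ = Real.exp (γ * t ^ 2) / (2 * γ * t) * c := mul_comm _ _
end

section
/- For β > 1, there exists h_c > 0 such that for every h with |h| < h_c the equation m = tanh(β(m + h)) has exactly three solutions in (−1, 1), while for |h| > h_c it has exactly one solution. -/
open Real Set Filter Topology

noncomputable def atanhR (y : ℝ) : ℝ := Real.log ((1 + y) / (1 - y)) / 2

lemma tanh_eq_exp (x : ℝ) :
    Real.tanh x = (Real.exp (2*x) - 1) / (Real.exp (2*x) + 1) := by
  rw [Real.tanh_eq_sinh_div_cosh, Real.sinh_eq, Real.cosh_eq]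
  have h1 : 0 < Real.exp x := Real.exp_pos x
  have h2 : Real.exp (2*x) = Real.exp x * Real.exp x := by
    rw [two_mul, Real.exp_add]
  have h3 : Real.exp (-x) = (Real.exp x)⁻¹ := Real.exp_neg x
  rw [h2, h3]
  have h4 : Real.exp x + (Real.exp x)⁻¹ ≠ 0 := by positivity
  have h5 : Real.exp x * Real.exp x + 1 ≠ 0 := by positivity
  field_simp

lemma atanhR_tanh (x : ℝ) : atanhR (Real.tanh x) = x := by
  have he : 0 < Real.exp (2*x) := Real.exp_pos _
  have he1 : Real.exp (2*x) + 1 ≠ 0 := by positivity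
  rw [tanh_eq_exp]
  have key : (1 + (Real.exp (2*x) - 1) / (Real.exp (2*x) + 1)) /
      (1 - (Real.exp (2*x) - 1) / (Real.exp (2*x) + 1)) = Real.exp (2*x) := by
    field_simp
    ring
  unfold atanhR
  rw [key, Real.log_exp]
  ring

lemma tanh_atanhR {y : ℝ} (h1 : -1 < y) (h2 : y < 1) : Real.tanh (atanhR y) = y := by
  have hy1 : 0 < 1 + y := by linarith
  have hy2 : 0 < 1 - y := by linarith
  have hq : 0 < (1 + y) / (1 - y) := div_pos hy1 hy2
  rw [tanh_eq_exp]
  have h3 : 2 * atanhR y = Real.log ((1 + y) / (1 - y)) := by unfold atanhR; ring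
  rw [h3, Real.exp_log hq]
  field_simp
  ring

lemma atanhR_neg (y : ℝ) : atanhR (-y) = - atanhR y := by
  unfold atanhR
  rw [show (1 + -y) / (1 - -y) = ((1 + y) / (1 - y))⁻¹ by rw [inv_div]; ring_nf,
    Real.log_inv]
  ring

lemma atanhR_zero : atanhR 0 = 0 := by simp [atanhR]

lemma hasDerivAt_atanhR {y : ℝ} (h1 : -1 < y) (h2 : y < 1) :
    HasDerivAt atanhR (1 / (1 - y^2)) y := by
  have hy1 : 0 < 1 + y := by linarith
  have hy2 : 0 < 1 - y := by linarith
  have d1 : HasDerivAt (fun x : ℝ => Real.log (1 + x)) (1 / (1 + y)) y := by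
    have := ((hasDerivAt_id y).const_add 1).log (ne_of_gt hy1)
    simpa using this
  have d2 : HasDerivAt (fun x : ℝ => Real.log (1 - x)) ((-1) / (1 - y)) y := by
    have := ((hasDerivAt_id y).const_sub 1).log (ne_of_gt hy2)
    simpa using this
  have d : HasDerivAt (fun x : ℝ => (Real.log (1 + x) - Real.log (1 - x)) / 2)
      ((1 / (1 + y) - (-1) / (1 - y)) / 2) y := (d1.sub d2).div_const 2
  have heq : atanhR =ᶠ[𝓝 y] fun x : ℝ => (Real.log (1 + x) - Real.log (1 - x)) / 2 := by
    filter_upwards [Ioo_mem_nhds h1 h2] with x hx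
    unfold atanhR
    rw [Real.log_div (by linarith [hx.1] : (1:ℝ) + x ≠ 0) (by linarith [hx.2] : (1:ℝ) - x ≠ 0)]
  have := d.congr_of_eventuallyEq heq
  have hne : (1:ℝ) - y^2 ≠ 0 := by nlinarith
  have hne1 : (1:ℝ) + y ≠ 0 := by linarith
  have hne2 : (1:ℝ) - y ≠ 0 := by linarith
  have e : (1 / (1 + y) - (-1) / (1 - y)) / 2 = 1 / (1 - y^2) := by
    field_simp
    ring
  rw [e] at this
  exact this

lemma tendsto_atanhR_one : Tendsto atanhR (𝓝[<] (1:ℝ)) atTop := by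
  have h1 : Tendsto (fun y : ℝ => 1 + y) (𝓝[<] (1:ℝ)) (𝓝 2) := by
    have h : Tendsto (fun y : ℝ => 1 + y) (𝓝[<] (1:ℝ)) (𝓝 (1+1)) :=
      ((continuousAt_const.add continuousAt_id).tendsto).mono_left nhdsWithin_le_nhds
    norm_num at h
    exact h
  have h2 : Tendsto (fun y : ℝ => (1 - y)⁻¹) (𝓝[<] (1:ℝ)) atTop := by
    apply tendsto_inv_nhdsGT_zero.comp
    apply tendsto_nhdsWithin_of_tendsto_nhds_of_eventually_within
    · have h : Tendsto (fun y : ℝ => 1 - y) (𝓝[<] (1:ℝ)) (𝓝 (1-1)) :=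
        ((continuousAt_const.sub continuousAt_id).tendsto).mono_left nhdsWithin_le_nhds
      norm_num at h
      exact h
    · filter_upwards [self_mem_nhdsWithin] with y hy
      simp only [mem_Iio] at hy
      simp only [mem_Ioi]
      linarith
  have h3 : Tendsto (fun y : ℝ => (1 + y) * (1 - y)⁻¹) (𝓝[<] (1:ℝ)) atTop :=
    h1.pos_mul_atTop two_pos h2
  have h4 : Tendsto (fun y : ℝ => Real.log ((1 + y) / (1 - y))) (𝓝[<] (1:ℝ)) atTop := by
    apply Real.tendsto_log_atTop.comp
    simpa [div_eq_mul_inv] using h3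
  exact h4.atTop_div_const two_pos

lemma tendsto_atanhR_negone : Tendsto atanhR (𝓝[>] (-1:ℝ)) atBot := by
  have h0 : Tendsto (fun y : ℝ => (1 + y) / (1 - y)) (𝓝[>] (-1:ℝ)) (𝓝[>] 0) := by
    apply tendsto_nhdsWithin_of_tendsto_nhds_of_eventually_within
    · have h : ContinuousAt (fun y : ℝ => (1 + y) / (1 - y)) (-1) := by
        apply ContinuousAt.div (by fun_prop) (by fun_prop) (by norm_num)
      have h2 : Tendsto (fun y : ℝ => (1 + y) / (1 - y)) (𝓝[>] (-1:ℝ)) (𝓝 ((1 + -1)/(1 - -1))) :=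
        h.tendsto.mono_left nhdsWithin_le_nhds
      norm_num at h2
      exact h2
    · filter_upwards [Ioo_mem_nhdsGT (show (-1:ℝ) < 1 by norm_num)] with y hy
      simp only [mem_Ioi]
      exact div_pos (by linarith [hy.1]) (by linarith [hy.2])
  have h4 : Tendsto (fun y : ℝ => Real.log ((1 + y) / (1 - y))) (𝓝[>] (-1:ℝ)) atBot :=
    Real.tendsto_log_nhdsGT_zero.comp h0
  exact h4.atBot_div_const two_pos

/-- For `β > 1` there is a coercive field `h_c > 0`: for `|h| < h_c` the mean-field equation
`m = tanh(β(m+h))` has exactly three solutions in `(-1,1)`, for `|h| > h_c` exactly one. -/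
theorem stmt_3 (β : ℝ) (hβ : 1 < β) :
    ∃ h_c > 0, ∀ h : ℝ,
      (|h| < h_c →
        Set.ncard {m : ℝ | m ∈ Set.Ioo (-1 : ℝ) 1 ∧ m = Real.tanh (β * (m + h))} = 3) ∧
      (h_c < |h| →
        Set.ncard {m : ℝ | m ∈ Set.Ioo (-1 : ℝ) 1 ∧ m = Real.tanh (β * (m + h))} = 1) := by
  have hβ0 : 0 < β := by linarith
  set f : ℝ → ℝ := fun m => atanhR m / β - m with hf
  have hc2 : 0 < 1 - 1/β := by
    have : 1/β < 1 := by rw [div_lt_one hβ0]; exact hβ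
    linarith
  set c : ℝ := Real.sqrt (1 - 1/β) with hcdef
  have hc0 : 0 < c := Real.sqrt_pos.mpr hc2
  have hcsq : c^2 = 1 - 1/β := Real.sq_sqrt hc2.le
  have hβinv : 0 < 1/β := by positivity
  have hc1 : c < 1 := by nlinarith [hcsq, hc0, hβinv]
  -- derivative of f
  have hderiv : ∀ x ∈ Ioo (-1:ℝ) 1, HasDerivAt f (1/((1-x^2)*β) - 1) x := by
    intro x hx
    have hne : (0:ℝ) < 1 - x^2 := by nlinarith [hx.1, hx.2]
    have h := ((hasDerivAt_atanhR hx.1 hx.2).div_const β).sub (hasDerivAt_id x)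
    rw [div_div] at h
    exact h
  have hcont : ∀ x ∈ Ioo (-1:ℝ) 1, ContinuousAt f x := fun x hx => (hderiv x hx).continuousAt
  have hderiv' : ∀ x ∈ Ioo (-1:ℝ) 1, deriv f x = 1/((1-x^2)*β) - 1 :=
    fun x hx => (hderiv x hx).deriv
  have hsub1 : Ioc (-1:ℝ) (-c) ⊆ Ioo (-1) 1 :=
    fun x hx => ⟨hx.1, lt_of_le_of_lt hx.2 (by linarith)⟩
  have hsub2 : Icc (-c) c ⊆ Ioo (-1:ℝ) 1 :=
    fun x hx => ⟨by linarith [hx.1], by linarith [hx.2]⟩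
  have hsub3 : Ico c 1 ⊆ Ioo (-1:ℝ) 1 := fun x hx => ⟨by linarith [hx.1], hx.2⟩
  -- derivative sign
  have dpos : ∀ x ∈ Ioo (-1:ℝ) 1, c^2 < x^2 → 0 < deriv f x := by
    intro x hx hxx
    rw [hderiv' x hx]
    have h1 : 0 < 1 - x^2 := by nlinarith [hx.1, hx.2]
    have h2 : 1 - x^2 < 1/β := by rw [hcsq] at hxx; linarith
    have h3 : (1-x^2)*β < 1 := by
      calc (1-x^2)*β < (1/β)*β := mul_lt_mul_of_pos_right h2 hβ0
      _ = 1 := by field_simp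
    have := (one_lt_div (mul_pos h1 hβ0)).mpr h3
    linarith
  have dneg : ∀ x ∈ Ioo (-1:ℝ) 1, x^2 < c^2 → deriv f x < 0 := by
    intro x hx hxx
    rw [hderiv' x hx]
    have h1 : 0 < 1 - x^2 := by nlinarith [hx.1, hx.2]
    have h2 : 1/β < 1 - x^2 := by rw [hcsq] at hxx; linarith
    have h3 : 1 < (1-x^2)*β := by
      calc 1 = (1/β)*β := by field_simp
      _ < (1-x^2)*β := mul_lt_mul_of_pos_right h2 hβ0
    have := (div_lt_one (mul_pos h1 hβ0)).mpr h3
    linarith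
  -- monotonicity on the three branches
  have mono1 : StrictMonoOn f (Ioc (-1:ℝ) (-c)) := by
    apply strictMonoOn_of_deriv_pos (convex_Ioc _ _)
    · exact fun x hx => (hcont x (hsub1 hx)).continuousWithinAt
    · intro x hx
      rw [interior_Ioc] at hx
      have hx' : x ∈ Ioo (-1:ℝ) 1 := hsub1 (Ioo_subset_Ioc_self hx)
      have p1 : (0:ℝ) < -(x+c) := by linarith [hx.2]
      have p2 : (0:ℝ) < -(x-c) := by linarith [hx.2, hc0]
      exact dpos x hx' (by nlinarith [mul_pos p1 p2])
  have anti2 : StrictAntiOn f (Icc (-c) c) := by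
    apply strictAntiOn_of_deriv_neg (convex_Icc _ _)
    · exact fun x hx => (hcont x (hsub2 hx)).continuousWithinAt
    · intro x hx
      rw [interior_Icc] at hx
      have hx' : x ∈ Ioo (-1:ℝ) 1 := hsub2 (Ioo_subset_Icc_self hx)
      have p1 : (0:ℝ) < c - x := by linarith [hx.2]
      have p2 : (0:ℝ) < c + x := by linarith [hx.1]
      exact dneg x hx' (by nlinarith [mul_pos p1 p2])
  have mono3 : StrictMonoOn f (Ico c 1) := by
    apply strictMonoOn_of_deriv_pos (convex_Ico _ _)
    · exact fun x hx => (hcont x (hsub3 hx)).continuousWithinAt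
    · intro x hx
      rw [interior_Ico] at hx
      have hx' : x ∈ Ioo (-1:ℝ) 1 := hsub3 (Ioo_subset_Ico_self hx)
      have p1 : (0:ℝ) < x - c := by linarith [hx.1]
      have p2 : (0:ℝ) < x + c := by linarith [hx.1, hc0]
      exact dpos x hx' (by nlinarith [mul_pos p1 p2])
  -- special values
  have hf0 : f 0 = 0 := by simp [hf, atanhR_zero]
  have hfc : f c = - f (-c) := by
    simp only [hf, atanhR_neg]
    ring
  have hpos : 0 < f (-c) := by
    have := anti2 (show -c ∈ Icc (-c) c by constructor <;> linarith)
      (show (0:ℝ) ∈ Icc (-c) c by constructor <;> linarith) (by linarith)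
    rw [hf0] at this
    exact this
  -- limits
  have hflim_top : Tendsto f (𝓝[<] (1:ℝ)) atTop := by
    have h1 : Tendsto (fun m : ℝ => atanhR m / β) (𝓝[<] (1:ℝ)) atTop :=
      tendsto_atanhR_one.atTop_div_const hβ0
    have h2 : Tendsto (fun m : ℝ => -m) (𝓝[<] (1:ℝ)) (𝓝 (-1)) :=
      (continuousAt_id.neg.tendsto).mono_left nhdsWithin_le_nhds
    have := h1.atTop_add h2
    simpa [hf, sub_eq_add_neg] using this
  have hflim_bot : Tendsto f (𝓝[>] (-1:ℝ)) atBot := by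
    have h1 : Tendsto (fun m : ℝ => atanhR m / β) (𝓝[>] (-1:ℝ)) atBot :=
      tendsto_atanhR_negone.atBot_div_const hβ0
    have h2 : Tendsto (fun m : ℝ => -m) (𝓝[>] (-1:ℝ)) (𝓝 (-(-1))) :=
      (continuousAt_id.neg.tendsto).mono_left nhdsWithin_le_nhds
    have := h1.atBot_add h2
    simpa [hf, sub_eq_add_neg] using this
  -- extraction of points near the boundary
  have exL : ∀ h : ℝ, ∃ x, x ∈ Ioo (-1:ℝ) (-c) ∧ f x < h := by
    intro h
    have h1 : ∀ᶠ x in 𝓝[>] (-1:ℝ), f x < h := hflim_bot.eventually (eventually_lt_atBot h)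
    have h2 : ∀ᶠ x in 𝓝[>] (-1:ℝ), x ∈ Ioo (-1:ℝ) (-c) :=
      Ioo_mem_nhdsGT (show (-1:ℝ) < -c by linarith)
    obtain ⟨x, hx1, hx2⟩ := (h1.and h2).exists
    exact ⟨x, hx2, hx1⟩
  have exR : ∀ h : ℝ, ∃ y, y ∈ Ioo c 1 ∧ h < f y := by
    intro h
    have h1 : ∀ᶠ y in 𝓝[<] (1:ℝ), h < f y := hflim_top.eventually (eventually_gt_atTop h)
    have h2 : ∀ᶠ y in 𝓝[<] (1:ℝ), y ∈ Ioo c 1 :=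
      Ioo_mem_nhdsLT (show c < 1 by linarith)
    obtain ⟨y, hy1, hy2⟩ := (h1.and h2).exists
    exact ⟨y, hy2, hy1⟩
  -- unique solutions on each branch
  have solL : ∀ h : ℝ, h < f (-c) → ∃ a, a ∈ Ioo (-1:ℝ) (-c) ∧ f a = h ∧
      ∀ m ∈ Ioc (-1:ℝ) (-c), f m = h → m = a := by
    intro h hh
    obtain ⟨x, hx, hxh⟩ := exL h
    have hcontx : ContinuousOn f (Icc x (-c)) := fun z hz =>
      (hcont z ⟨lt_of_lt_of_le hx.1 hz.1, by linarith [hz.2]⟩).continuousWithinAt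
    obtain ⟨a, ha, hfa⟩ := intermediate_value_Icc hx.2.le hcontx ⟨hxh.le, hh.le⟩
    have hac : a < -c := by
      rcases eq_or_lt_of_le ha.2 with he | h' 
      · exact absurd (he ▸ hfa) (by rw [he] at hfa; exact absurd hfa (by linarith))
      · exact h'
    have ha1 : -1 < a := lt_of_lt_of_le hx.1 ha.1
    refine ⟨a, ⟨ha1, hac⟩, hfa, fun m hm hmh => ?_⟩
    exact mono1.injOn hm ⟨ha1, hac.le⟩ (by rw [hmh, hfa])
  have solM : ∀ h : ℝ, -f (-c) < h → h < f (-c) → ∃ b, b ∈ Ioo (-c) c ∧ f b = h ∧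
      ∀ m ∈ Icc (-c) c, f m = h → m = b := by
    intro h hh1 hh2
    have hcontm : ContinuousOn f (Icc (-c) c) := fun z hz =>
      (hcont z (hsub2 hz)).continuousWithinAt
    obtain ⟨b, hb, hfb⟩ := intermediate_value_Icc' (show -c ≤ c by linarith) hcontm
      ⟨by rw [hfc]; linarith, hh2.le⟩
    have hb1 : -c < b := by
      rcases eq_or_lt_of_le hb.1 with he | h'
      · exfalso; rw [← he] at hfb; linarith
      · exact h'
    have hb2 : b < c := by
      rcases eq_or_lt_of_le hb.2 with he | h'
      · exfalso; rw [he] at hfb; rw [hfc] at hfb; linarith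
      · exact h'
    refine ⟨b, ⟨hb1, hb2⟩, hfb, fun m hm hmh => ?_⟩
    exact anti2.injOn hm hb (by rw [hmh, hfb])
  have solR : ∀ h : ℝ, -f (-c) < h → ∃ e, e ∈ Ioo c 1 ∧ f e = h ∧
      ∀ m ∈ Ico c 1, f m = h → m = e := by
    intro h hh
    obtain ⟨y, hy, hyh⟩ := exR h
    have hconty : ContinuousOn f (Icc c y) := fun z hz =>
      (hcont z ⟨by linarith [hz.1], lt_of_le_of_lt hz.2 hy.2⟩).continuousWithinAt
    obtain ⟨e, he, hfe⟩ := intermediate_value_Icc hy.1.le hconty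
      ⟨by rw [hfc]; linarith, hyh.le⟩
    have hec : c < e := by
      rcases eq_or_lt_of_le he.1 with heq | h'
      · exfalso; rw [← heq] at hfe; rw [hfc] at hfe; linarith
      · exact h'
    have he1 : e < 1 := lt_of_le_of_lt he.2 hy.2
    refine ⟨e, ⟨hec, he1⟩, hfe, fun m hm hmh => ?_⟩
    exact mono3.injOn hm ⟨hec.le, he1⟩ (by rw [hmh, hfe])
  -- bounds on branches
  have le1 : ∀ m ∈ Ioc (-1:ℝ) (-c), f m ≤ f (-c) := by
    intro m hm
    rcases eq_or_lt_of_le hm.2 with heq | h'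
    · rw [heq]
    · exact (mono1 hm ⟨by linarith, le_rfl⟩ h').le
  have le2 : ∀ m ∈ Icc (-c) c, f m ≤ f (-c) := by
    intro m hm
    rcases eq_or_lt_of_le hm.1 with heq | h'
    · rw [← heq]
    · exact (anti2 ⟨le_rfl, by linarith⟩ hm h').le
  have ge2 : ∀ m ∈ Icc (-c) c, - f (-c) ≤ f m := by
    intro m hm
    rcases eq_or_lt_of_le hm.2 with heq | h'
    · rw [heq, hfc]
    · rw [← hfc]; exact (anti2 hm ⟨by linarith, le_rfl⟩ h').le
  have ge3 : ∀ m ∈ Ico c 1, - f (-c) ≤ f m := by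
    intro m hm
    rcases eq_or_lt_of_le hm.1 with heq | h'
    · rw [← heq, hfc]
    · rw [← hfc]; exact (mono3 ⟨le_rfl, by linarith⟩ hm h').le
  -- characterization of the equation
  have hchar : ∀ h m : ℝ, m ∈ Ioo (-1:ℝ) 1 → (m = Real.tanh (β*(m+h)) ↔ f m = h) := by
    intro h m hm
    constructor
    · intro he
      have h1 : atanhR m = β*(m+h) := by
        conv_lhs => rw [he]
        rw [atanhR_tanh]
      show atanhR m / β - m = h
      rw [h1]; field_simp; ring
    · intro he
      have h1 : atanhR m = β*(m+h) := by
        have h2 : atanhR m / β - m = h := he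
        field_simp at h2
        linarith
      rw [← h1, tanh_atanhR hm.1 hm.2]
  have hset : ∀ h : ℝ, {m : ℝ | m ∈ Ioo (-1:ℝ) 1 ∧ m = Real.tanh (β*(m+h))} =
      {m : ℝ | m ∈ Ioo (-1:ℝ) 1 ∧ f m = h} := by
    intro h; ext m; simp only [mem_setOf_eq]
    exact and_congr_right fun hm => hchar h m hm
  refine ⟨f (-c), hpos, fun h => ⟨?_, ?_⟩⟩
  · intro habs
    obtain ⟨hn, hp⟩ := abs_lt.mp habs
    rw [hset h, Set.ncard_eq_three]
    obtain ⟨a, ha, hfa, hua⟩ := solL h hp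
    obtain ⟨b, hb, hfb, hub⟩ := solM h hn hp
    obtain ⟨e, he, hfe, hue⟩ := solR h hn
    refine ⟨a, b, e, by linarith [ha.2, hb.1], by linarith [ha.2, hb.1, hb.2, he.1],
      by linarith [hb.2, he.1], ?_⟩
    ext m
    simp only [mem_setOf_eq, mem_insert_iff, mem_singleton_iff]
    constructor
    · rintro ⟨hm, hmh⟩
      rcases le_or_gt m (-c) with h' | h'
      · exact Or.inl (hua m ⟨hm.1, h'⟩ hmh)
      rcases le_or_gt m c with h'' | h''
      · exact Or.inr (Or.inl (hub m ⟨h'.le, h''⟩ hmh))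
      · exact Or.inr (Or.inr (hue m ⟨h''.le, hm.2⟩ hmh))
    · rintro (rfl | rfl | rfl)
      · exact ⟨⟨ha.1, by linarith [ha.2]⟩, hfa⟩
      · exact ⟨⟨by linarith [hb.1], by linarith [hb.2]⟩, hfb⟩
      · exact ⟨⟨by linarith [he.1], he.2⟩, hfe⟩
  · intro habs
    rw [hset h, Set.ncard_eq_one]
    rcases le_or_gt 0 h with hs | hs
    · -- h > f (-c)
      have hh : f (-c) < h := by rwa [abs_of_nonneg hs] at habs
      obtain ⟨e, he, hfe, hue⟩ := solR h (by linarith)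
      refine ⟨e, ?_⟩
      ext m
      simp only [mem_setOf_eq, mem_singleton_iff]
      constructor
      · rintro ⟨hm, hmh⟩
        rcases le_or_gt c m with h' | h'
        · exact hue m ⟨h', hm.2⟩ hmh
        · exfalso
          rcases le_or_gt m (-c) with h'' | h''
          · have := le1 m ⟨hm.1, h''⟩; linarith [hmh ▸ this]
          · have := le2 m ⟨h''.le, h'.le⟩; linarith [hmh ▸ this]
      · rintro rfl
        exact ⟨⟨by linarith [he.1], he.2⟩, hfe⟩
    · -- h < - f (-c)
      have hh : h < - f (-c) := by
        rw [abs_of_neg hs] at habs; linarith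
      obtain ⟨a, ha, hfa, hua⟩ := solL h (by linarith)
      refine ⟨a, ?_⟩
      ext m
      simp only [mem_setOf_eq, mem_singleton_iff]
      constructor
      · rintro ⟨hm, hmh⟩
        rcases le_or_gt m (-c) with h' | h'
        · exact hua m ⟨hm.1, h'⟩ hmh
        · exfalso
          rcases le_or_gt m c with h'' | h''
          · have := ge2 m ⟨h'.le, h''⟩; linarith [hmh ▸ this]
          · have := ge3 m ⟨h''.le, hm.2⟩; linarith [hmh ▸ this]
      · rintro rfl
        exact ⟨⟨ha.1, by linarith [ha.2]⟩, hfa⟩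
end

section
/- For F(m,h) = −m + tanh(β(m+h)) with β > 1, the Taylor expansion of F around the critical point (m_c, −h_c) has vanishing zeroth and first order terms in (m − m_c), with leading behavior F(m,h) = (h + h_c) − β m_c (m − m_c)² + O((h+h_c)(m−m_c)) + O((h+h_c)²) + O((m−m_c)³). -/
lemma tanh_hasDerivAt' (x : ℝ) : HasDerivAt Real.tanh (1 - Real.tanh x ^ 2) x := by
  have h : Real.tanh = fun y => Real.sinh y / Real.cosh y := by
    funext y; exact Real.tanh_eq_sinh_div_cosh y
  rw [h]
  have := (Real.hasDerivAt_sinh x).div (Real.hasDerivAt_cosh x) (ne_of_gt (Real.cosh_pos x))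
  refine this.congr_deriv ?_
  have h1 := Real.cosh_sq_sub_sinh_sq x
  simp only
  field_simp

lemma tanh_abs_le_one' (x : ℝ) : |Real.tanh x| ≤ 1 := by
  rw [Real.tanh_eq_sinh_div_cosh, abs_div, abs_of_pos (Real.cosh_pos x),
    div_le_one (Real.cosh_pos x), abs_le]
  rw [Real.sinh_eq, Real.cosh_eq]
  constructor <;> nlinarith [Real.exp_pos x, Real.exp_pos (-x)]

lemma T_hasDerivAt (t0 s : ℝ) :
    HasDerivAt (fun u => Real.tanh (t0 + u)) (1 - Real.tanh (t0 + s) ^ 2) s := by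
  have h1 : HasDerivAt (fun u : ℝ => t0 + u) 1 s := (hasDerivAt_id s).const_add t0
  exact ((tanh_hasDerivAt' (t0 + s)).comp s h1).congr_deriv (by ring)

lemma mvt_step (g g' : ℝ → ℝ) (K : ℝ) (hK : 0 ≤ K) (n : ℕ)
    (hg : ∀ t, HasDerivAt g (g' t) t) (hg0 : g 0 = 0)
    (hb : ∀ t, |g' t| ≤ K * |t| ^ n) (s : ℝ) : |g s| ≤ K * |s| ^ (n + 1) := by
  have habs : ∀ t ∈ Set.uIcc (0:ℝ) s, |t| ≤ |s| := by
    intro t ht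
    rcases le_total 0 s with h | h
    · rw [Set.uIcc_of_le h] at ht
      rw [abs_of_nonneg ht.1, abs_of_nonneg h]; exact ht.2
    · rw [Set.uIcc_of_ge h] at ht
      rw [abs_of_nonpos ht.2, abs_of_nonpos h]; linarith [ht.1]
  have key := Convex.norm_image_sub_le_of_norm_hasDerivWithin_le
    (f := g) (f' := g') (C := K * |s| ^ n) (s := Set.uIcc (0:ℝ) s)
    (fun t _ => (hg t).hasDerivWithinAt)
    (fun t ht => by
      calc ‖g' t‖ ≤ K * |t| ^ n := hb t
        _ ≤ K * |s| ^ n := by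
          exact mul_le_mul_of_nonneg_left (pow_le_pow_left₀ (abs_nonneg t) (habs t ht) n) hK)
    (convex_uIcc 0 s) Set.left_mem_uIcc Set.right_mem_uIcc
  simpa [hg0, Real.norm_eq_abs, pow_succ, mul_assoc] using key

/-- Third-order Taylor bound for tanh around a point `t0` where `tanh t0 = a`
and `1 - a^2 = 1/β`. -/
lemma tanh_taylor (β t0 a : ℝ) (hβ : 1 < β) (ha : Real.tanh t0 = a)
    (hdeg : β * (1 - a ^ 2) = 1) (s : ℝ) :
    |Real.tanh (t0 + s) - a - s / β + a * s ^ 2 / β| ≤ 6 * |s| ^ 3 := by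
  have hβ0 : (β : ℝ) ≠ 0 := by positivity
  have hinv : 1 - a ^ 2 = 1 / β := by field_simp; linarith [hdeg]
  set T : ℝ → ℝ := fun u => Real.tanh (t0 + u) with hT
  have hT0 : T 0 = a := by simp [hT, ha]
  set g2 : ℝ → ℝ := fun u => -2 * T u * (1 - T u ^ 2) + 2 * a / β with hg2
  set g3 : ℝ → ℝ := fun u => -2 * (1 - T u ^ 2) ^ 2 + 4 * T u ^ 2 * (1 - T u ^ 2) with hg3
  set g1 : ℝ → ℝ := fun u => (1 - T u ^ 2) - 1 / β + 2 * a * u / β with hg1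
  set g0 : ℝ → ℝ := fun u => T u - a - u / β + a * u ^ 2 / β with hg0
  have hd2 : ∀ u, HasDerivAt g2 (g3 u) u := by
    intro u
    have h1 := T_hasDerivAt t0 u
    have h2 := ((h1.const_mul (-2)).mul ((h1.pow 2).const_sub 1)).add_const (2 * a / β)
    refine h2.congr_deriv ?_
    simp only [hg3, hT, id_eq, Pi.pow_apply]
    push_cast
    ring
  have hd1 : ∀ u, HasDerivAt g1 (g2 u) u := by
    intro u
    have h1 := T_hasDerivAt t0 u
    have h2 := (((h1.pow 2).const_sub 1).sub_const (1 / β)).add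
        (((hasDerivAt_id u).const_mul (2 * a)).div_const β)
    refine h2.congr_deriv ?_
    simp only [hg2, hT, id_eq]
    push_cast
    ring
  have hd0 : ∀ u, HasDerivAt g0 (g1 u) u := by
    intro u
    have h1 := T_hasDerivAt t0 u
    have h2 := (((h1.sub_const a).sub ((hasDerivAt_id u).div_const β)).add
        ((((hasDerivAt_id u).pow 2).const_mul a).div_const β))
    refine h2.congr_deriv ?_
    simp only [hg1, hT, id_eq]
    push_cast
    ring
  have hb3 : ∀ u, |g3 u| ≤ 6 * |u| ^ 0 := by
    intro u
    have h1 : T u ^ 2 ≤ 1 := by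
      have := abs_le.mp (tanh_abs_le_one' (t0 + u))
      simp only [hT]; nlinarith
    have h2 : (0:ℝ) ≤ T u ^ 2 := sq_nonneg _
    simp only [pow_zero, mul_one, hg3, abs_le]
    constructor <;> nlinarith
  have hb2 : ∀ u, |g2 u| ≤ 6 * |u| ^ 1 := by
    refine mvt_step g2 g3 6 (by norm_num) 0 hd2 ?_ hb3
    simp only [hg2, hT0, add_zero, hinv]; ring
  have hb1 : ∀ u, |g1 u| ≤ 6 * |u| ^ 2 := by
    refine mvt_step g1 g2 6 (by norm_num) 1 hd1 ?_ hb2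
    simp [hg1, hT0, hinv]
  have hb0 := mvt_step g0 g1 6 (by norm_num) 2 hd0 (by simp [hg0, hT0]) hb1 s
  simpa [hg0] using hb0

set_option maxHeartbeats 1000000 in
/-- Taylor expansion of the drift `F(m,h) = −m + tanh(β(m+h))` around the critical point
`(m_c, −h_c)`: `F(m,h) = (h+h_c) − β m_c (m−m_c)² + O((h+h_c)(m−m_c)) + O((h+h_c)²) + O((m−m_c)³)`. -/
theorem stmt_5 (β h_c m_c : ℝ) (hβ : 1 < β) (hhc : 0 < h_c)
    (hmc : m_c = Real.tanh (β * (m_c - h_c)))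
    (hdeg : β * (1 - m_c ^ 2) = 1) :
    ∃ C > 0, ∃ δ > 0, ∀ m h : ℝ, |m - m_c| < δ → |h + h_c| < δ →
      |(-m + Real.tanh (β * (m + h))) - ((h + h_c) - β * m_c * (m - m_c) ^ 2)|
        ≤ C * (|h + h_c| * |m - m_c| + (h + h_c) ^ 2 + |m - m_c| ^ 3) := by
  have hβ0 : (β : ℝ) ≠ 0 := by positivity
  refine ⟨24 * β ^ 3 * (|m_c| + 1), by positivity, 1, one_pos, fun m h hx he => ?_⟩
  set x := m - m_c with hxdef
  set e := h + h_c with hedef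
  set s := β * (x + e) with hsdef
  set t0 := β * (m_c - h_c) with ht0def
  clear_value x e s t0
  have harg : β * (m + h) = t0 + s := by rw [ht0def, hsdef, hxdef, hedef]; ring
  have htay := tanh_taylor β t0 m_c hβ hmc.symm hdeg s
  -- rewrite the main expression
  have hkey : (-m + Real.tanh (β * (m + h))) - (e - β * m_c * x ^ 2)
      = (Real.tanh (t0 + s) - m_c - s / β + m_c * s ^ 2 / β)
        - β * m_c * (2 * x * e + e ^ 2) := by
    rw [harg, hsdef, hxdef, hedef]
    field_simp
    ring
  rw [hkey]
  set A := |x| with hA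
  set B := |e| with hB
  clear_value A B
  have hA0 : 0 ≤ A := by rw [hA]; exact abs_nonneg x
  have hB0 : 0 ≤ B := by rw [hB]; exact abs_nonneg e
  have hA1 : A ≤ 1 := le_of_lt hx
  have hB1 : B ≤ 1 := le_of_lt he
  have hM0 : 0 ≤ |m_c| := abs_nonneg _
  have hs3 : |s| ^ 3 ≤ β ^ 3 * (A + B) ^ 3 := by
    have h1 : |s| ≤ β * (A + B) := by
      rw [hsdef, abs_mul, abs_of_pos (by linarith : (0:ℝ) < β)]
      have := abs_add_le x e
      nlinarith
    calc |s| ^ 3 ≤ (β * (A + B)) ^ 3 := pow_le_pow_left₀ (abs_nonneg s) h1 3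
      _ = β ^ 3 * (A + B) ^ 3 := by ring
  have h2nd : |β * m_c * (2 * x * e + e ^ 2)| ≤ β * |m_c| * (2 * A * B + B ^ 2) := by
    rw [abs_mul, abs_mul, abs_of_pos (by linarith : (0:ℝ) < β)]
    have : |2 * x * e + e ^ 2| ≤ 2 * A * B + B ^ 2 := by
      calc |2 * x * e + e ^ 2| ≤ |2 * x * e| + |e ^ 2| := abs_add_le _ _
        _ = 2 * A * B + B ^ 2 := by
          rw [hA, hB, abs_mul, abs_mul, abs_pow, abs_two]
    exact mul_le_mul_of_nonneg_left this (by positivity)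
  have hcube : (A + B) ^ 3 ≤ A ^ 3 + 3 * (A * B) + 4 * B ^ 2 := by
    nlinarith [mul_nonneg (mul_nonneg hA0 hB0) (sub_nonneg.2 hA1),
      mul_nonneg (mul_nonneg hB0 hB0) (sub_nonneg.2 hA1),
      mul_nonneg (mul_nonneg hB0 hB0) (sub_nonneg.2 hB1)]
  have hsq : e ^ 2 = B ^ 2 := by rw [hB, sq_abs]
  have hβ3 : β ≤ β ^ 3 := le_self_pow₀ hβ.le three_ne_zero
  calc |(Real.tanh (t0 + s) - m_c - s / β + m_c * s ^ 2 / β)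
        - β * m_c * (2 * x * e + e ^ 2)|
      ≤ |Real.tanh (t0 + s) - m_c - s / β + m_c * s ^ 2 / β|
        + |β * m_c * (2 * x * e + e ^ 2)| := abs_sub _ _
    _ ≤ 6 * |s| ^ 3 + β * |m_c| * (2 * A * B + B ^ 2) := by linarith
    _ ≤ 6 * (β ^ 3 * (A + B) ^ 3) + β * |m_c| * (2 * A * B + B ^ 2) := by linarith
    _ ≤ 24 * β ^ 3 * (|m_c| + 1) * (B * A + e ^ 2 + A ^ 3) := by
        rw [hsq]
        have hc6 : 6 * (β ^ 3 * (A + B) ^ 3)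
            ≤ 6 * β ^ 3 * (A ^ 3 + 3 * (A * B) + 4 * B ^ 2) := by
          have := mul_le_mul_of_nonneg_left hcube (by positivity : (0:ℝ) ≤ β ^ 3)
          nlinarith
        have h2a : β * |m_c| * (2 * A * B + B ^ 2)
            ≤ β ^ 3 * |m_c| * (2 * A * B + B ^ 2) := by
          have h0 : (0:ℝ) ≤ |m_c| * (2 * A * B + B ^ 2) := by positivity
          nlinarith [mul_le_mul_of_nonneg_right hβ3 h0]
        have n1 : (0:ℝ) ≤ β ^ 3 * (A * B) := by positivity
        have n2 : (0:ℝ) ≤ β ^ 3 * B ^ 2 := by positivity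
        have n3 : (0:ℝ) ≤ β ^ 3 * A ^ 3 := by positivity
        have n4 : (0:ℝ) ≤ β ^ 3 * |m_c| * (A * B) := by positivity
        have n5 : (0:ℝ) ≤ β ^ 3 * |m_c| * B ^ 2 := by positivity
        have n6 : (0:ℝ) ≤ β ^ 3 * |m_c| * A ^ 3 := by positivity
        nlinarith [hc6, h2a, n1, n2, n3, n4, n5, n6]
end

section
/- There exists a decreasing solution y*(t) of the ODE y'(t) = t² − y²(t) such that −t > y*(t) > −√(t² + 1) for all t ≥ 0. -/
open Set MeasureTheory Real Filter

noncomputable def Mker (t s : ℝ) : ℝ := Real.exp (-(2*t*s) - s^2)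

noncomputable def Mint (α t : ℝ) : ℝ := ∫ s in Set.Ioi (0:ℝ), s ^ α * Mker t s

lemma Mker_pos (t s : ℝ) : 0 < Mker t s := Real.exp_pos _

lemma hbound (α b t s : ℝ) (hs : 0 < s) (ht : |t| ≤ b) :
    ‖s ^ α * Mker t s‖ ≤ Real.exp ((1+2*b)^2/4) * (Real.exp (-s) * s ^ α) := by
  have h1 : -t ≤ b := neg_le_of_neg_le (abs_le.mp ht).1
  have hsα : (0:ℝ) ≤ s ^ α := (Real.rpow_pos_of_pos hs α).le
  rw [Real.norm_eq_abs, abs_mul, abs_of_nonneg hsα, abs_of_pos (Mker_pos t s)]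
  have key : Mker t s ≤ Real.exp ((1+2*b)^2/4) * Real.exp (-s) := by
    rw [Mker, ← Real.exp_add, Real.exp_le_exp]
    nlinarith [sq_nonneg (s - (1+2*b)/2), mul_le_mul_of_nonneg_right h1 (le_of_lt hs)]
  calc s ^ α * Mker t s ≤ s ^ α * (Real.exp ((1+2*b)^2/4) * Real.exp (-s)) :=
        mul_le_mul_of_nonneg_left key hsα
    _ = Real.exp ((1+2*b)^2/4) * (Real.exp (-s) * s ^ α) := by ring

lemma meas_aux (α t : ℝ) : AEStronglyMeasurable (fun s => s ^ α * Mker t s)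
    (volume.restrict (Set.Ioi (0:ℝ))) := by
  apply ContinuousOn.aestronglyMeasurable _ measurableSet_Ioi
  intro s hs
  exact ((Real.continuousAt_rpow_const s α (Or.inl (ne_of_gt hs))).continuousWithinAt).mul
    (Continuous.continuousWithinAt (by unfold Mker; continuity))

lemma integrable_gamma (α : ℝ) (hα : -1 < α) :
    IntegrableOn (fun s => Real.exp (-s) * s ^ α) (Set.Ioi (0:ℝ)) := by
  have := Real.GammaIntegral_convergent (by linarith : (0:ℝ) < α + 1)
  simpa using this

lemma Mint_integrable (α : ℝ) (hα : -1 < α) (t : ℝ) :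
    IntegrableOn (fun s => s ^ α * Mker t s) (Set.Ioi (0:ℝ)) := by
  apply Integrable.mono' (((integrable_gamma α hα).const_mul (Real.exp ((1+2*|t|)^2/4))))
    (meas_aux α t)
  filter_upwards [ae_restrict_mem measurableSet_Ioi] with s hs
  exact hbound α |t| t s hs le_rfl

lemma Mint_pos (α : ℝ) (hα : -1 < α) (t : ℝ) : 0 < Mint α t := by
  rw [Mint, setIntegral_pos_iff_support_of_nonneg_ae _ (Mint_integrable α hα t)]
  · have h1 : Set.Ioi (0:ℝ) ⊆ Function.support (fun s => s ^ α * Mker t s) ∩ Set.Ioi 0 := by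
      intro s hs
      exact ⟨(mul_pos (Real.rpow_pos_of_pos hs α) (Mker_pos t s)).ne', hs⟩
    have h2 := measure_mono (μ := (volume : Measure ℝ)) h1
    rw [Real.volume_Ioi] at h2
    exact lt_of_lt_of_le (by simp) h2
  · filter_upwards [ae_restrict_mem measurableSet_Ioi] with s hs
    exact (mul_pos (Real.rpow_pos_of_pos hs α) (Mker_pos t s)).le

lemma Mint_hasDeriv (α : ℝ) (hα : -1 < α) (t₀ : ℝ) :
    HasDerivAt (Mint α) (-2 * Mint (α+1) t₀) t₀ := by
  have hb : ∀ᵐ s ∂(volume.restrict (Set.Ioi (0:ℝ))), ∀ t ∈ Metric.ball t₀ 1,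
      ‖-2 * (s ^ (α+1) * Mker t s)‖ ≤
        2 * (Real.exp ((1+2*(|t₀|+1))^2/4) * (Real.exp (-s) * s ^ (α+1))) := by
    filter_upwards [ae_restrict_mem measurableSet_Ioi] with s hs t ht
    have ht' : |t| ≤ |t₀| + 1 := by
      have h := mem_ball_iff_norm.mp ht
      rw [Real.norm_eq_abs] at h
      calc |t| = |t₀ + (t - t₀)| := by ring_nf
        _ ≤ |t₀| + |t - t₀| := abs_add_le _ _
        _ ≤ |t₀| + 1 := by linarith
    have hb2 := hbound (α+1) (|t₀|+1) t s hs ht'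
    rw [norm_mul, norm_neg, norm_two]
    exact mul_le_mul_of_nonneg_left hb2 (by norm_num)
  have hdiff : ∀ᵐ s ∂(volume.restrict (Set.Ioi (0:ℝ))), ∀ t ∈ Metric.ball t₀ 1,
      HasDerivAt (fun t => s ^ α * Mker t s) (-2 * (s ^ (α+1) * Mker t s)) t := by
    filter_upwards [ae_restrict_mem measurableSet_Ioi] with s hs t _
    have h1 : HasDerivAt (fun t : ℝ => -(2*t*s) - s^2) (-(2*s)) t := by
      have h := (((hasDerivAt_id t).const_mul (2*s)).neg.sub_const (s^2))
      have he : (fun t : ℝ => -(2*t*s) - s^2) = fun t => -(2*s*t) - s^2 := by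
        funext x; ring
      rw [he]; simpa using h
    have h2 : HasDerivAt (fun t : ℝ => Mker t s) (Mker t s * (-(2*s))) t := h1.exp
    have h3 := h2.const_mul (s ^ α)
    refine h3.congr_deriv ?_
    rw [Real.rpow_add hs, Real.rpow_one]
    ring
  have key := hasDerivAt_integral_of_dominated_loc_of_deriv_le
    (μ := volume.restrict (Set.Ioi (0:ℝ)))
    (F := fun t s => s ^ α * Mker t s) (F' := fun t s => -2 * (s ^ (α+1) * Mker t s))
    (x₀ := t₀) (s := Metric.ball t₀ 1)
    (bound := fun s => 2 * (Real.exp ((1+2*(|t₀|+1))^2/4) * (Real.exp (-s) * s ^ (α+1))))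
    (Metric.ball_mem_nhds t₀ one_pos)
    (Filter.Eventually.of_forall fun t => meas_aux α t)
    (Mint_integrable α hα t₀)
    ((meas_aux (α+1) t₀).const_mul (-2))
    hb
    (((integrable_gamma (α+1) (by linarith)).const_mul _).const_mul 2)
    hdiff
  have h4 := key.2
  rw [MeasureTheory.integral_const_mul] at h4
  exact h4

lemma Mker_hasDerivAt_s (t s : ℝ) :
    HasDerivAt (fun s => Mker t s) (Mker t s * (-(2*t) - 2*s)) s := by
  have h1 : HasDerivAt (fun s : ℝ => -(2*t*s) - s^2) (-(2*t) - 2*s) s := by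
    have h := (((hasDerivAt_id s).const_mul (2*t)).fun_neg.fun_sub (hasDerivAt_pow 2 s))
    have he : (fun s : ℝ => -(2*t*s) - s^2) = fun s => -(2*t*s) - s^2 := rfl
    simpa using h.congr_deriv (by ring)
  exact h1.exp

lemma Mint_ibp (t : ℝ) :
    Mint (3/2) t = Mint (-(1/2)) t / 4 - t * Mint (1/2) t := by
  set f : ℝ → ℝ := fun s => s ^ ((1:ℝ)/2) * Mker t s with hf
  set f' : ℝ → ℝ := fun s => 1/2 * (s ^ (-(1/2):ℝ) * Mker t s)
      - 2*t*(s ^ ((1:ℝ)/2) * Mker t s) - 2*(s ^ ((3:ℝ)/2) * Mker t s) with hf'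
  have hderiv : ∀ s ∈ Set.Ioi (0:ℝ), HasDerivAt f (f' s) s := by
    intro s hs
    have hs' : (0:ℝ) < s := hs
    have h1 : HasDerivAt (fun x : ℝ => x ^ ((1:ℝ)/2)) (1/2 * s ^ (-(1/2):ℝ)) s := by
      have h := Real.hasDerivAt_rpow_const (x := s) (p := (1:ℝ)/2) (Or.inl hs'.ne')
      convert h using 1
      norm_num
    have h2 := h1.mul (Mker_hasDerivAt_s t s)
    refine h2.congr_deriv ?_
    rw [hf']
    have e1 : s ^ ((3:ℝ)/2) = s ^ ((1:ℝ)/2) * s := by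
      rw [show (3:ℝ)/2 = 1/2 + 1 by norm_num, Real.rpow_add hs', Real.rpow_one]
    simp only [e1]
    ring
  have hcont : ContinuousWithinAt f (Set.Ici 0) 0 := by
    apply ContinuousWithinAt.mul
    · exact (Real.continuousAt_rpow_const 0 (1/2) (Or.inr (by norm_num))).continuousWithinAt
    · exact (Continuous.continuousWithinAt (by unfold Mker; continuity))
  have hint : IntegrableOn f' (Set.Ioi (0:ℝ)) := by
    apply Integrable.sub
    apply Integrable.sub
    · exact (Mint_integrable (-(1/2)) (by norm_num) t).const_mul _
    · exact (Mint_integrable (1/2) (by norm_num) t).const_mul _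
    · exact (Mint_integrable (3/2) (by norm_num) t).const_mul _
  have htend : Filter.Tendsto f Filter.atTop (nhds 0) := by
    apply squeeze_zero' (g := fun s => Real.exp ((1+2*|t|)^2/4) * (Real.exp (-s) * s ^ ((1:ℝ)/2)))
    · filter_upwards [Filter.eventually_gt_atTop 0] with s hs
      exact (mul_pos (Real.rpow_pos_of_pos hs _) (Mker_pos t s)).le
    · filter_upwards [Filter.eventually_gt_atTop 0] with s hs
      have := hbound ((1:ℝ)/2) |t| t s hs le_rfl
      rwa [Real.norm_eq_abs, abs_of_pos (mul_pos (Real.rpow_pos_of_pos hs _) (Mker_pos t s))] at this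
    · have h0 := tendsto_rpow_mul_exp_neg_mul_atTop_nhds_zero ((1:ℝ)/2) 1 one_pos
      have : Filter.Tendsto (fun s : ℝ => Real.exp (-s) * s ^ ((1:ℝ)/2)) Filter.atTop (nhds 0) := by
        refine h0.congr' ?_
        filter_upwards with s
        rw [mul_comm]
        norm_num
      simpa using (this.const_mul (Real.exp ((1+2*|t|)^2/4)))
  have key := MeasureTheory.integral_Ioi_of_hasDerivAt_of_tendsto hcont hderiv hint htend
  have hf0 : f 0 = 0 := by
    rw [hf]
    simp [Real.zero_rpow (by norm_num : (1:ℝ)/2 ≠ 0)]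
  rw [hf0, sub_zero] at key
  have hsplit : ∫ s in Set.Ioi (0:ℝ), f' s
      = 1/2 * Mint (-(1/2)) t - 2*t*Mint (1/2) t - 2*Mint (3/2) t := by
    rw [hf']
    rw [MeasureTheory.integral_sub, MeasureTheory.integral_sub,
      MeasureTheory.integral_const_mul, MeasureTheory.integral_const_mul,
      MeasureTheory.integral_const_mul]
    · rfl
    · exact (Mint_integrable (-(1/2)) (by norm_num) t).const_mul _
    · exact (Mint_integrable (1/2) (by norm_num) t).const_mul _
    · apply Integrable.sub
      · exact (Mint_integrable (-(1/2)) (by norm_num) t).const_mul _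
      · exact (Mint_integrable (1/2) (by norm_num) t).const_mul _
    · exact (Mint_integrable (3/2) (by norm_num) t).const_mul _
  rw [hsplit] at key
  linarith

lemma Mint_cs (t : ℝ) : (Mint (1/2) t)^2 < Mint (-(1/2)) t * Mint (3/2) t := by
  set A := Mint (-(1/2)) t with hAdef
  set B := Mint (1/2) t with hBdef
  set C3 := Mint (3/2) t with hCdef
  have hA : 0 < A := Mint_pos _ (by norm_num) t
  have hB : 0 < B := Mint_pos _ (by norm_num) t
  set lam : ℝ := B / A with hlamdef
  have hlam : 0 < lam := div_pos hB hA
  set h : ℝ → ℝ := fun s => (lam * s ^ (-(1/4):ℝ) - s ^ ((3:ℝ)/4))^2 * Mker t s with hh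
  set g : ℝ → ℝ := fun s => lam^2 * (s ^ (-(1/2):ℝ) * Mker t s)
      - 2*lam*(s ^ ((1:ℝ)/2) * Mker t s) + s ^ ((3:ℝ)/2) * Mker t s with hg
  have heq : Set.EqOn g h (Set.Ioi 0) := by
    intro s hs
    have hs' : (0:ℝ) < s := hs
    have e1 : s ^ (-(1/4):ℝ) * s ^ (-(1/4):ℝ) = s ^ (-(1/2):ℝ) := by
      rw [← Real.rpow_add hs']; norm_num
    have e2 : s ^ (-(1/4):ℝ) * s ^ ((3:ℝ)/4) = s ^ ((1:ℝ)/2) := by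
      rw [← Real.rpow_add hs']; norm_num
    have e3 : s ^ ((3:ℝ)/4) * s ^ ((3:ℝ)/4) = s ^ ((3:ℝ)/2) := by
      rw [← Real.rpow_add hs']; norm_num
    simp only [hg, hh, ← e1, ← e2, ← e3]
    ring
  have hgint : IntegrableOn g (Set.Ioi (0:ℝ)) := by
    apply Integrable.add
    apply Integrable.sub
    · exact (Mint_integrable (-(1/2)) (by norm_num) t).const_mul _
    · exact (Mint_integrable (1/2) (by norm_num) t).const_mul _
    · exact (Mint_integrable (3/2) (by norm_num) t)
  have hhint : IntegrableOn h (Set.Ioi (0:ℝ)) := hgint.congr_fun heq measurableSet_Ioi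
  have hpos : 0 < ∫ s in Set.Ioi (0:ℝ), h s := by
    rw [setIntegral_pos_iff_support_of_nonneg_ae _ hhint]
    · have hsub : Set.Ioi (lam) ⊆ Function.support h ∩ Set.Ioi 0 := by
        intro s hs
        have hs0 : (0:ℝ) < s := lt_trans hlam hs
        refine ⟨?_, hs0⟩
        have hne : lam * s ^ (-(1/4):ℝ) - s ^ ((3:ℝ)/4) ≠ 0 := by
          have e4 : s ^ ((3:ℝ)/4) = s * s ^ (-(1/4):ℝ) := by
            rw [show (3:ℝ)/4 = 1 + -(1/4) by norm_num, Real.rpow_add hs0, Real.rpow_one]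
          have hrp : (0:ℝ) < s ^ (-(1/4):ℝ) := Real.rpow_pos_of_pos hs0 _
          have hlt : lam * s ^ (-(1/4):ℝ) < s * s ^ (-(1/4):ℝ) :=
            mul_lt_mul_of_pos_right hs hrp
          rw [← e4] at hlt
          exact (sub_neg.mpr hlt).ne
        exact mul_ne_zero (pow_ne_zero 2 hne) (Mker_pos t s).ne'
      have h2 := measure_mono (μ := (volume : Measure ℝ)) hsub
      rw [Real.volume_Ioi] at h2
      exact lt_of_lt_of_le (by simp) h2
    · filter_upwards [ae_restrict_mem measurableSet_Ioi] with s hs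
      exact mul_nonneg (sq_nonneg _) (Mker_pos t s).le
  have hgval : ∫ s in Set.Ioi (0:ℝ), g s = lam^2 * A - 2*lam*B + C3 := by
    rw [hg, MeasureTheory.integral_add, MeasureTheory.integral_sub,
      MeasureTheory.integral_const_mul, MeasureTheory.integral_const_mul]
    · rfl
    · exact (Mint_integrable (-(1/2)) (by norm_num) t).const_mul _
    · exact (Mint_integrable (1/2) (by norm_num) t).const_mul _
    · apply Integrable.sub
      · exact (Mint_integrable (-(1/2)) (by norm_num) t).const_mul _
      · exact (Mint_integrable (1/2) (by norm_num) t).const_mul _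
    · exact (Mint_integrable (3/2) (by norm_num) t)
  have hkey : 0 < lam^2 * A - 2*lam*B + C3 := by
    rw [← hgval]
    rw [MeasureTheory.setIntegral_congr_fun measurableSet_Ioi heq]
    exact hpos
  have h2 : lam^2 * A - 2*lam*B + C3 = C3 - B^2/A := by
    rw [hlamdef]; field_simp; ring
  rw [h2] at hkey
  have h3 : B^2/A < C3 := by linarith
  calc B^2 = B^2/A * A := by field_simp
    _ < C3 * A := by exact mul_lt_mul_of_pos_right h3 hA
    _ = A * C3 := mul_comm _ _

noncomputable def ystar (t : ℝ) : ℝ := -t - 2 * (Mint (1/2) t / Mint (-(1/2)) t)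

lemma deriv_A (t : ℝ) : HasDerivAt (Mint (-(1/2))) (-2 * Mint (1/2) t) t := by
  have h := Mint_hasDeriv (-(1/2)) (by norm_num) t
  rwa [show (-(1/2):ℝ) + 1 = 1/2 by norm_num] at h

lemma deriv_B (t : ℝ) : HasDerivAt (Mint (1/2)) (-2 * Mint (3/2) t) t := by
  have h := Mint_hasDeriv (1/2) (by norm_num) t
  rwa [show (1/2:ℝ) + 1 = 3/2 by norm_num] at h

lemma ystar_hasDeriv (t : ℝ) : HasDerivAt ystar (t^2 - (ystar t)^2) t := by
  have hA := Mint_pos (-(1/2)) (by norm_num) t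
  have hdiv := (deriv_B t).div (deriv_A t) hA.ne'
  have hder := ((hasDerivAt_id t).neg.sub (hdiv.const_mul 2))
  have hfun : (fun t => -(id t) - 2 * (Mint (1/2) t / Mint (-(1/2)) t)) = ystar := rfl
  have hder : HasDerivAt ystar _ t := hder
  refine hder.congr_deriv ?_
  have hC := Mint_ibp t
  rw [ystar, hC]
  set A := Mint (-(1/2)) t with hA2
  set B := Mint (1/2) t with hB2
  have hAne : A ≠ 0 := hA.ne'
  field_simp
  ring

lemma ystar_lt (t : ℝ) : ystar t < -t := by
  have hA := Mint_pos (-(1/2)) (by norm_num) t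
  have hB := Mint_pos (1/2) (by norm_num) t
  have : 0 < 2 * (Mint (1/2) t / Mint (-(1/2)) t) := by positivity
  rw [ystar]; linarith

lemma ystar_gt (t : ℝ) (ht : 0 ≤ t) : -Real.sqrt (t^2+1) < ystar t := by
  have hA := Mint_pos (-(1/2)) (by norm_num) t
  have hB := Mint_pos (1/2) (by norm_num) t
  set A := Mint (-(1/2)) t
  set B := Mint (1/2) t
  have hcs := Mint_cs t
  have hibp := Mint_ibp t
  rw [hibp] at hcs
  have h6 : (t*A + 2*B)^2 < (t^2+1)*A^2 := by nlinarith
  have h7 : t + 2*(B/A) = (t*A + 2*B)/A := by field_simp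
  have key : (t + 2*(B/A))^2 < t^2 + 1 := by
    rw [h7, div_pow, div_lt_iff₀ (pow_pos hA 2)]
    exact h6
  have h8 : t + 2*(B/A) < Real.sqrt (t^2+1) := by
    rw [Real.lt_sqrt (by positivity)]
    exact key
  rw [ystar]
  have : -(t + 2*(B/A)) = -t - 2*(B/A) := by ring
  linarith [neg_lt_neg h8]

lemma ystar_anti : StrictAntiOn ystar (Set.Ici (0:ℝ)) := by
  apply strictAntiOn_of_deriv_neg (convex_Ici 0)
  · exact fun x _ => ((ystar_hasDeriv x).continuousAt).continuousWithinAt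
  · intro x hx
    rw [interior_Ici] at hx
    rw [(ystar_hasDeriv x).deriv]
    have h1 := ystar_lt x
    have hx' : (0:ℝ) < x := hx
    nlinarith

/-- There is a decreasing solution `y*` of `y' = t² − y²` with `−t > y*(t) > −√(t²+1)` for `t ≥ 0`. -/
theorem stmt_6 :
    ∃ ystar : ℝ → ℝ,
      (∀ t ∈ Set.Ici (0 : ℝ), HasDerivAt ystar (t ^ 2 - (ystar t) ^ 2) t) ∧
      StrictAntiOn ystar (Set.Ici (0 : ℝ)) ∧
      ∀ t ∈ Set.Ici (0 : ℝ), ystar t < -t ∧ -Real.sqrt (t ^ 2 + 1) < ystar t := by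
  exact ⟨ystar, fun t _ => ystar_hasDeriv t, ystar_anti,
    fun t ht => ⟨ystar_lt t, ystar_gt t ht⟩⟩
end

section
/- Let y(t) solve y' = t² − y² with y(t₀) = y₀, t₀ ≥ 0. If y₀ < y*(t₀), where y* is the critical decreasing solution satisfying −t > y*(t) > −√(t²+1) for t ≥ 0, then y(t) is decreasing for t ≥ t₀ and blows up to −∞ in finite time. -/
open Filter

private lemma cont_integral_hasDerivAt {f : ℝ → ℝ} (hf : Continuous f) (a b : ℝ) :
    HasDerivAt (fun u => ∫ x in a..u, f x) (f b) b :=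
  intervalIntegral.integral_hasDerivAt_right (hf.intervalIntegrable a b)
    (hf.stronglyMeasurable.stronglyMeasurableAtFilter) hf.continuousAt

/-- Solutions of `y' = t² − y²` starting below the critical solution `y*` are decreasing
and blow up to `−∞` in finite time. -/
theorem stmt_7 (t₀ y₀ : ℝ) (ht₀ : 0 ≤ t₀) (ystar : ℝ → ℝ)
    (hstar : ∀ t ∈ Set.Ici (0 : ℝ), HasDerivAt ystar (t ^ 2 - (ystar t) ^ 2) t)
    (hbound : ∀ t ∈ Set.Ici (0 : ℝ), ystar t < -t ∧ -Real.sqrt (t ^ 2 + 1) < ystar t)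
    (hy₀ : y₀ < ystar t₀) :
    ∃ Tstar > t₀, ∃ y : ℝ → ℝ,
      y t₀ = y₀ ∧
      (∀ t ∈ Set.Ico t₀ Tstar, HasDerivAt y (t ^ 2 - (y t) ^ 2) t) ∧
      StrictAntiOn y (Set.Ico t₀ Tstar) ∧
      Tendsto y (nhdsWithin Tstar (Set.Iio Tstar)) atBot := by
  -- a globally continuous extension of ystar
  set z : ℝ → ℝ := fun t => ystar (max t t₀) with hzdef
  have hzy : ∀ t, t₀ ≤ t → z t = ystar t := fun t ht => by
    simp only [hzdef, max_eq_left ht]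
  have hzcont : Continuous z := by
    rw [continuous_iff_continuousAt]
    intro t
    have h1 : (0:ℝ) ≤ max t t₀ := le_trans ht₀ (le_max_right t t₀)
    have hm : ContinuousAt (fun t : ℝ => max t t₀) t :=
      (continuous_id.max continuous_const).continuousAt
    exact ContinuousAt.comp (g := ystar) (f := fun t : ℝ => max t t₀) (x := t)
      ((hstar _ h1).continuousAt) hm
  have hzneg : ∀ t, z t < 0 := by
    intro t
    have h1 : (0:ℝ) ≤ max t t₀ := le_trans ht₀ (le_max_right t t₀)
    have := (hbound _ h1).1
    linarith
  -- the integrating factor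
  set g : ℝ → ℝ := fun t => ∫ s in t₀..t, 2 * z s with hgdef
  have hg : ∀ t, HasDerivAt g (2 * z t) t := fun t =>
    cont_integral_hasDerivAt (by fun_prop) t₀ t
  have hgcont : Continuous g := by
    rw [continuous_iff_continuousAt]; exact fun t => (hg t).continuousAt
  set F : ℝ → ℝ := fun t => ∫ s in t₀..t, Real.exp (-(g s)) with hFdef
  have hF : ∀ t, HasDerivAt F (Real.exp (-(g t))) t := fun t =>
    cont_integral_hasDerivAt (by fun_prop) t₀ t
  have hFcont : Continuous F := by
    rw [continuous_iff_continuousAt]; exact fun t => (hF t).continuousAt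
  set v₀ : ℝ := (y₀ - ystar t₀)⁻¹ with hv₀def
  have hsub : y₀ - ystar t₀ < 0 := by linarith
  have hv₀neg : v₀ < 0 := inv_lt_zero.2 hsub
  set v : ℝ → ℝ := fun t => Real.exp (g t) * (v₀ + F t) with hvdef
  have hv : ∀ t, HasDerivAt v (2 * z t * v t + 1) t := by
    intro t
    have h1 : HasDerivAt (fun t => Real.exp (g t)) (2 * z t * Real.exp (g t)) t := by
      simpa [mul_comm] using (hg t).exp
    have h2 : HasDerivAt (fun t => v₀ + F t) (Real.exp (-(g t))) t := (hF t).const_add v₀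
    have h3 := h1.mul h2
    convert h3 using 1
    · rfl
    · rfl
    · rfl
    rw [Real.exp_neg, mul_inv_cancel₀ (Real.exp_ne_zero _)]
    simp only [hvdef]
    ring
  have hvcont : Continuous v := by
    rw [continuous_iff_continuousAt]; exact fun t => (hv t).continuousAt
  have hg0 : g t₀ = 0 := by simp [hgdef]
  have hF0 : F t₀ = 0 := by simp [hFdef]
  have hv0 : v t₀ = v₀ := by simp [hvdef, hg0, hF0]
  -- g ≤ 0 on [t₀, ∞)
  have hgnonpos : ∀ t, t₀ ≤ t → g t ≤ 0 := by
    intro t ht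
    have h1 : ∫ s in t₀..t, 2 * z s ≤ ∫ _s in t₀..t, (0:ℝ) := by
      apply intervalIntegral.integral_mono_on ht
        ((by fun_prop : Continuous fun s => 2 * z s).intervalIntegrable _ _)
        intervalIntegrable_const
      intro s _
      have := hzneg s; linarith
    simpa [hgdef] using h1
  -- F grows at least linearly
  have hFge : ∀ t, t₀ ≤ t → t - t₀ ≤ F t := by
    intro t ht
    have h1 : ∫ s in t₀..t, (1:ℝ) ≤ ∫ s in t₀..t, Real.exp (-(g s)) := by
      apply intervalIntegral.integral_mono_on ht
        (intervalIntegrable_const) ((by fun_prop : Continuous fun s => Real.exp (-(g s))).intervalIntegrable _ _)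
      intro s hs
      have := hgnonpos s hs.1
      calc (1:ℝ) = Real.exp 0 := (Real.exp_zero).symm
        _ ≤ Real.exp (-(g s)) := Real.exp_le_exp.2 (by linarith)
    simpa using h1
  -- F is strictly monotone
  have hFmono : StrictMono F := by
    apply strictMono_of_deriv_pos
    intro x
    rw [(hF x).deriv]
    exact Real.exp_pos _
  -- find the blow-up time by IVT
  set c : ℝ := (ystar t₀ - y₀)⁻¹ with hcdef
  have hcpos : 0 < c := inv_pos.2 (by linarith)
  have hv₀c : v₀ = -c := by
    rw [hv₀def, hcdef, show ystar t₀ - y₀ = -(y₀ - ystar t₀) by ring, inv_neg, neg_neg]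
  have hIVT : ∃ T ∈ Set.Icc t₀ (t₀ + c), F T = c := by
    have h1 : c ∈ Set.Icc (F t₀) (F (t₀ + c)) := by
      constructor
      · rw [hF0]; exact hcpos.le
      · have := hFge (t₀ + c) (by linarith)
        linarith
    have h2 := intermediate_value_Icc (by linarith : t₀ ≤ t₀ + c) hFcont.continuousOn
    obtain ⟨T, hT, hFT⟩ := h2 h1
    exact ⟨T, hT, hFT⟩
  obtain ⟨T, hTmem, hFT⟩ := hIVT
  have hTgt : t₀ < T := by
    rcases lt_or_eq_of_le hTmem.1 with h | h
    · exact h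
    · exfalso; rw [← h] at hFT; rw [hF0] at hFT; linarith
  have hvT : v T = 0 := by
    simp [hvdef, hFT, hv₀c]
  -- v is negative on [t₀, T)
  have hvneg : ∀ t ∈ Set.Ico t₀ T, v t < 0 := by
    intro t ht
    have h1 : F t < F T := hFmono ht.2
    have h2 : v₀ + F t < 0 := by rw [hv₀c]; linarith [hFT ▸ h1]
    exact mul_neg_of_pos_of_neg (Real.exp_pos _) h2
  -- define the solution
  set y : ℝ → ℝ := fun t => ystar t + (v t)⁻¹ with hydef
  have hyt₀ : y t₀ = y₀ := by
    simp only [hydef, hv0, hv₀def, inv_inv]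
    ring
  -- y < ystar < -t on [t₀, T)
  have hylt : ∀ t ∈ Set.Ico t₀ T, y t < -t := by
    intro t ht
    have h1 : (v t)⁻¹ < 0 := inv_lt_zero.2 (hvneg t ht)
    have h2 := (hbound t (le_trans ht₀ ht.1)).1
    simp only [hydef]; linarith
  -- y satisfies the ODE on [t₀, T)
  have hyODE : ∀ t ∈ Set.Ico t₀ T, HasDerivAt y (t ^ 2 - (y t) ^ 2) t := by
    intro t ht
    have hvne : v t ≠ 0 := (hvneg t ht).ne
    have h1 : HasDerivAt ystar (t ^ 2 - (ystar t) ^ 2) t := hstar t (le_trans ht₀ ht.1)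
    have h2 : HasDerivAt (fun s => (v s)⁻¹) (-(2 * z t * v t + 1) / (v t) ^ 2) t := (hv t).inv hvne
    have h3 := h1.add h2
    have hz : z t = ystar t := hzy t ht.1
    convert h3 using 1
    · rfl
    · rfl
    · rfl
    rw [hz]
    simp only [hydef]
    field_simp [hydef]
    ring
  -- strictly decreasing
  have hanti : StrictAntiOn y (Set.Ico t₀ T) := by
    apply strictAntiOn_of_deriv_neg (convex_Ico t₀ T)
    · intro x hx
      exact (hyODE x hx).continuousAt.continuousWithinAt
    · intro x hx
      rw [interior_Ico] at hx
      have hx' : x ∈ Set.Ico t₀ T := ⟨hx.1.le, hx.2⟩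
      rw [(hyODE x hx').deriv]
      have h1 := hylt x hx'
      have h2 : 0 ≤ x := le_trans ht₀ hx'.1
      nlinarith
  -- blow-up
  have hvlim : Tendsto v (nhdsWithin T (Set.Iio T)) (nhdsWithin 0 (Set.Iio 0)) := by
    rw [tendsto_nhdsWithin_iff]
    constructor
    · have h0 : Tendsto v (nhdsWithin T (Set.Iio T)) (nhds (v T)) :=
        (hvcont.continuousAt (x := T)).continuousWithinAt (s := Set.Iio T)
      rwa [hvT] at h0
    · filter_upwards [Ioo_mem_nhdsLT_of_mem (show T ∈ Set.Ioc t₀ T from ⟨hTgt, le_refl T⟩)]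
        with t ht
      exact hvneg t ⟨ht.1.le, ht.2⟩
  have hinvlim : Tendsto (fun t => (v t)⁻¹) (nhdsWithin T (Set.Iio T)) atBot := by
    have h1 : Tendsto (fun t => -v t) (nhdsWithin T (Set.Iio T)) (nhdsWithin 0 (Set.Ioi 0)) := by
      rw [tendsto_nhdsWithin_iff] at hvlim ⊢
      constructor
      · have := hvlim.1.neg; simpa using this
      · filter_upwards [hvlim.2] with t ht
        simpa using ht
    have h2 : Tendsto (fun t => (-v t)⁻¹) (nhdsWithin T (Set.Iio T)) atTop :=
      tendsto_inv_nhdsGT_zero.comp h1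
    have h3 : Tendsto (fun t => -(-v t)⁻¹) (nhdsWithin T (Set.Iio T)) atBot :=
      tendsto_neg_atTop_atBot.comp h2
    have heq : (fun t => -(-v t)⁻¹) = fun t => (v t)⁻¹ := by
      funext t; rw [inv_neg, neg_neg]
    rwa [heq] at h3
  have hylim : Tendsto y (nhdsWithin T (Set.Iio T)) atBot := by
    have h1 : Tendsto ystar (nhdsWithin T (Set.Iio T)) (nhds (ystar T)) :=
      ((hstar T (le_trans ht₀ hTgt.le)).continuousAt).continuousWithinAt
    have h2 : ∀ᶠ t in nhdsWithin T (Set.Iio T), ystar t ≤ ystar T + 1 :=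
      h1.eventually_le_const (lt_add_one _)
    exact tendsto_atBot_add_left_of_ge' _ (ystar T + 1) h2 hinvlim
  exact ⟨T, hTgt, y, hyt₀, hyODE, hanti, hylim⟩
end

section
/- Let y(t) solve y' = t² − y² with y(t₀) = y₀ > y*(t₀), t₀ ≥ 0, where y* is the critical solution. Then for every δ ∈ (0,1) there exists t_δ ≥ t₀ such that |y(t) − t| ≤ 1/(2(1−δ)t) for all t ≥ t_δ. -/
open Set Filter
private lemma fence_lt {a : ℝ} {f B f' B' : ℝ → ℝ}
    (hf : ∀ x ∈ Set.Ici a, HasDerivAt f (f' x) x)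
    (hB : ∀ x ∈ Set.Ici a, HasDerivAt B (B' x) x)
    (h0 : f a ≤ B a)
    (bd : ∀ x ∈ Set.Ici a, f x = B x → f' x < B' x) :
    ∀ t ∈ Set.Ici a, f t ≤ B t := by
  intro t ht
  have H := image_le_of_deriv_right_lt_deriv_boundary' (a := a) (b := t) (f := f) (f' := f')
    (B := B) (B' := B')
    (fun x hx => (hf x hx.1).continuousAt.continuousWithinAt)
    (fun x hx => (hf x hx.1).hasDerivWithinAt)
    h0
    (fun x hx => (hB x hx.1).continuousAt.continuousWithinAt)
    (fun x hx => (hB x hx.1).hasDerivWithinAt)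
    (fun x hx => bd x hx.1)
  exact H ⟨ht, le_refl t⟩

private lemma fence_le {a : ℝ} {f B f' B' : ℝ → ℝ}
    (hf : ∀ x ∈ Set.Ici a, HasDerivAt f (f' x) x)
    (hB : ∀ x ∈ Set.Ici a, HasDerivAt B (B' x) x)
    (h0 : f a ≤ B a)
    (bd : ∀ x ∈ Set.Ici a, f' x ≤ B' x) :
    ∀ t ∈ Set.Ici a, f t ≤ B t := by
  intro t ht
  have H := image_le_of_deriv_right_le_deriv_boundary (a := a) (b := t) (f := f) (f' := f')
    (B := B) (B' := B')
    (fun x hx => (hf x hx.1).continuousAt.continuousWithinAt)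
    (fun x hx => (hf x hx.1).hasDerivWithinAt)
    h0
    (fun x hx => (hB x hx.1).continuousAt.continuousWithinAt)
    (fun x hx => (hB x hx.1).hasDerivWithinAt)
    (fun x hx => bd x hx.1)
  exact H ⟨ht, le_refl t⟩

private lemma step_comparison (t₀ : ℝ) (ht₀ : 0 ≤ t₀) (ystar y : ℝ → ℝ)
    (hstar : ∀ t ∈ Set.Ici (0:ℝ), HasDerivAt ystar (t^2 - (ystar t)^2) t)
    (hy : ∀ t ∈ Set.Ici t₀, HasDerivAt y (t^2 - (y t)^2) t)
    (h0 : ystar t₀ < y t₀) :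
    ∀ t ∈ Set.Ici t₀, ystar t < y t := by
  by_contra hcon
  push_neg at hcon
  obtain ⟨t', ht', hle⟩ := hcon
  set S : Set ℝ := {t | t₀ ≤ t ∧ y t ≤ ystar t} with hS
  have hne : S.Nonempty := ⟨t', ht', hle⟩
  have hbdd : BddBelow S := ⟨t₀, fun s hs => hs.1⟩
  set t₁ := sInf S with ht₁def
  have ht₁ge : t₀ ≤ t₁ := le_csInf hne fun s hs => hs.1
  -- continuity of g := y - ystar at points of Ici t₀
  have hgc : ∀ t ∈ Set.Ici t₀, ContinuousAt (fun s => y s - ystar s) t := fun t ht =>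
    ((hy t ht).continuousAt).sub ((hstar t (le_trans ht₀ ht)).continuousAt)
  -- y t₁ ≤ ystar t₁
  have hle₁ : y t₁ ≤ ystar t₁ := by
    by_contra hgt
    push_neg at hgt
    have hpos : (0:ℝ) < y t₁ - ystar t₁ := by linarith
    have hev : ∀ᶠ s in nhds t₁, 0 < y s - ystar s :=
      (hgc t₁ ht₁ge).eventually (eventually_gt_nhds hpos)
    rw [Metric.eventually_nhds_iff] at hev
    obtain ⟨ε, hε, hball⟩ := hev
    obtain ⟨s, hsS, hslt⟩ := exists_lt_of_csInf_lt hne (by linarith : sInf S < t₁ + ε)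
    have hst : t₁ ≤ s := csInf_le hbdd hsS
    have : 0 < y s - ystar s := hball (by rw [Real.dist_eq]; rw [abs_of_nonneg (by linarith)]; linarith)
    have := hsS.2
    linarith
  have ht₁gt : t₀ < t₁ := by
    rcases lt_or_eq_of_le ht₁ge with h | h
    · exact h
    · exfalso; rw [← h] at hle₁; linarith
  -- y t₁ = ystar t₁
  have heq₁ : y t₁ = ystar t₁ := by
    have hge : 0 ≤ y t₁ - ystar t₁ := by
      refine ge_of_tendsto (((hgc t₁ ht₁ge).continuousWithinAt (s := Iio t₁))) ?_
      filter_upwards [Ioo_mem_nhdsLT_of_mem (⟨ht₁gt, le_refl t₁⟩ : t₁ ∈ Ioc t₀ t₁)] with s hs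
      have hsI : s ∈ Set.Ici t₀ := le_of_lt hs.1
      have : s ∉ S := fun hmem => absurd (csInf_le hbdd hmem) (not_le.mpr hs.2)
      have : ¬ (y s ≤ ystar s) := fun h => this ⟨hsI, h⟩
      linarith [not_le.mp this]
    linarith
  -- bounds on y, ystar over Icc t₀ t₁
  have hycont : ContinuousOn y (Icc t₀ t₁) := fun t ht =>
    ((hy t ht.1).continuousAt).continuousWithinAt
  have hscont : ContinuousOn ystar (Icc t₀ t₁) := fun t ht =>
    ((hstar t (le_trans ht₀ ht.1)).continuousAt).continuousWithinAt
  obtain ⟨Cy, hCy⟩ := isCompact_Icc.exists_bound_of_continuousOn hycont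
  obtain ⟨Cs, hCs⟩ := isCompact_Icc.exists_bound_of_continuousOn hscont
  set R := max Cy Cs with hR
  have hR0 : 0 ≤ R := le_trans (norm_nonneg (y t₀)) (le_trans (hCy t₀ ⟨le_refl _, le_of_lt ht₁gt⟩) (le_max_left _ _))
  -- Lipschitz
  have hv : ∀ t : ℝ, LipschitzOnWith (2*R).toNNReal (fun x : ℝ => t^2 - x^2) (Icc (-R) R) := by
    intro t
    rw [lipschitzOnWith_iff_dist_le_mul]
    intro a ha b hb
    rw [Real.coe_toNNReal _ (by linarith), Real.dist_eq, Real.dist_eq]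
    have h1 : t^2 - a^2 - (t^2 - b^2) = -((a+b)*(a-b)) := by ring
    rw [h1, abs_neg, abs_mul]
    have : |a + b| ≤ 2*R := by
      rw [abs_le]
      constructor <;> nlinarith [ha.1, ha.2, hb.1, hb.2]
    exact mul_le_mul_of_nonneg_right this (abs_nonneg _)
  have key : EqOn y ystar (Icc t₀ t₁) := by
    apply ODE_solution_unique_of_mem_Icc_left (v := fun t x => t^2 - x^2)
      (s := fun _ => Icc (-R) R) (fun t _ => hv t) hycont
      (fun t ht => ((hy t (le_of_lt ht.1)).hasDerivWithinAt))
      (fun t ht => by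
        have := hCy t ⟨le_of_lt ht.1, ht.2⟩
        rw [Real.norm_eq_abs, abs_le] at this
        exact ⟨by linarith [le_max_left Cy Cs], by linarith [le_max_left Cy Cs]⟩)
      hscont
      (fun t ht => ((hstar t (le_trans ht₀ (le_of_lt ht.1))).hasDerivWithinAt))
      (fun t ht => by
        have := hCs t ⟨le_of_lt ht.1, ht.2⟩
        rw [Real.norm_eq_abs, abs_le] at this
        exact ⟨by linarith [le_max_right Cy Cs], by linarith [le_max_right Cy Cs]⟩)
      heq₁
  have := key ⟨le_refl t₀, le_of_lt ht₁gt⟩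
  linarith
private lemma step_cross (t₀ : ℝ) (ht₀ : 0 ≤ t₀) (ystar y : ℝ → ℝ)
    (hstar : ∀ t ∈ Set.Ici (0:ℝ), HasDerivAt ystar (t^2 - (ystar t)^2) t)
    (hbound : ∀ t ∈ Set.Ici (0:ℝ), ystar t < -t ∧ -Real.sqrt (t ^ 2 + 1) < ystar t)
    (hy : ∀ t ∈ Set.Ici t₀, HasDerivAt y (t^2 - (y t)^2) t)
    (hcomp : ∀ t ∈ Set.Ici t₀, ystar t < y t) :
    ∃ T, (t₀ ≤ T ∧ 1 ≤ T) ∧ ∀ t ≥ T, -t ≤ y t := by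
  set T₁ := t₀ + 1 with hT₁def
  have hT₁1 : 1 ≤ T₁ := by linarith
  have hT₁t₀ : t₀ ≤ T₁ := by linarith
  -- first find a crossing time
  have hex : ∃ T ≥ T₁, -T < y T := by
    by_contra hcon
    push_neg at hcon
    set g : ℝ → ℝ := fun t => y t - ystar t with hgdef
    have hgval : ∀ t, g t = y t - ystar t := fun t => by rw [hgdef]
    have hg : ∀ x ∈ Set.Ici T₁, HasDerivAt g (ystar x^2 - y x^2) x := by
      intro x hx
      have h := (hy x (by simp only [mem_Ici] at hx ⊢; linarith)).sub
        (hstar x (by simp only [mem_Ici] at hx ⊢; linarith))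
      exact h.congr_deriv (by ring)
    have hgT₁pos : 0 < g T₁ := by
      have := hcomp T₁ (by simp only [mem_Ici]; linarith)
      rw [hgval]; linarith
    set h : ℝ → ℝ := fun t => (g T₁ / 2) * Real.exp (2*T₁*(t - T₁)) with hhdef
    have hhval : ∀ t, h t = (g T₁ / 2) * Real.exp (2*T₁*(t - T₁)) := fun t => by rw [hhdef]
    clear_value h
    clear_value g
    have hh : ∀ x : ℝ, HasDerivAt h (2*T₁ * h x) x := by
      intro x
      have h1 : HasDerivAt (fun t : ℝ => 2*T₁*(t - T₁)) (2*T₁) x := by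
        simpa using ((hasDerivAt_id x).sub_const T₁).const_mul (2*T₁)
      have h2 := (h1.exp).const_mul (g T₁ / 2)
      have h3 : HasDerivAt h (g T₁ / 2 * (Real.exp (2*T₁*(x - T₁)) * (2*T₁))) x := by
        apply HasDerivAt.congr_of_eventuallyEq h2
        filter_upwards with t
        rw [hhval]
      convert h3 using 1
      rw [hhval]; ring
    have hfence : ∀ t ∈ Set.Ici T₁, h t ≤ g t := by
      apply fence_lt (f' := fun x => 2*T₁ * h x) (B' := fun x => ystar x^2 - y x^2)
        (fun x _ => hh x) hg
      · show h T₁ ≤ g T₁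
        have : h T₁ = g T₁ / 2 := by
          rw [hhval, sub_self, mul_zero, Real.exp_zero, mul_one]
        rw [this]; linarith
      · intro x hx hcontact
        show 2*T₁ * h x < ystar x^2 - y x^2
        have hcontact' : h x = y x - ystar x := by rw [hcontact, hgval]
        simp only [mem_Ici] at hx
        have h1 : 0 < y x - ystar x := by
          have := hcomp x (by simp only [mem_Ici]; linarith); linarith
        have hyx : y x ≤ -x := hcon x hx
        have hsx : ystar x < -x := (hbound x (by simp only [mem_Ici]; linarith)).1
        have h2 : 2*T₁ < -(ystar x + y x) := by linarith
        rw [hcontact']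
        have := mul_lt_mul_of_pos_left h2 h1
        nlinarith
    -- get contradiction for large t
    have l1 : Tendsto (fun t : ℝ => 2*T₁*(t - T₁)) atTop atTop := by
      apply Tendsto.const_mul_atTop (by linarith : (0:ℝ) < 2*T₁)
      simpa [sub_eq_add_neg] using tendsto_atTop_add_const_right atTop (-T₁) tendsto_id
    have l2 := (Real.tendsto_exp_atTop.comp l1).const_mul_atTop (by linarith : (0:ℝ) < g T₁ / 2)
    obtain ⟨b, hb1, hbT⟩ := ((l2.eventually_gt_atTop 1).and (eventually_ge_atTop T₁)).exists
    have hgb : g b < 1 := by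
      have hb0 : (0:ℝ) ≤ b := by linarith
      have hsb := (hbound b hb0).2
      have hyb := hcon b hbT
      have hsqrt : Real.sqrt (b^2+1) ≤ b + 1 := by
        rw [show b + 1 = Real.sqrt ((b+1)^2) by rw [Real.sqrt_sq (by linarith)]]
        exact Real.sqrt_le_sqrt (by nlinarith)
      rw [hgval]; linarith
    have hfb := hfence b hbT
    rw [hhval] at hfb
    simp only [Function.comp] at hb1
    linarith
  obtain ⟨T, hTT₁, hTy⟩ := hex
  refine ⟨T, ⟨by linarith, by linarith⟩, ?_⟩
  intro t ht
  have H := fence_lt (f := fun t => -t) (f' := fun _ => (-1:ℝ)) (B := y)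
    (B' := fun x => x^2 - (y x)^2)
    (fun x _ => by exact (hasDerivAt_id' x).neg)
    (fun x hx => hy x (by simp only [mem_Ici] at hx ⊢; linarith))
    (show -T ≤ y T by linarith)
    ?_ t ht
  · exact H
  intro x _ hcontact
  show (-1:ℝ) < x^2 - (y x)^2
  have hc : -x = y x := hcontact
  rw [← hc]
  simp [neg_sq]
set_option maxHeartbeats 1000000 in
private lemma step_final (t₀ T : ℝ) (y : ℝ → ℝ)
    (hy : ∀ t ∈ Set.Ici t₀, HasDerivAt y (t^2 - (y t)^2) t)
    (hTt₀ : t₀ ≤ T) (hT1 : 1 ≤ T) (hTy : ∀ t ≥ T, -t ≤ y t)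
    (δ : ℝ) (hδ : δ ∈ Set.Ioo (0:ℝ) 1) :
    ∃ tδ ≥ t₀, ∀ t ≥ tδ, |y t - t| ≤ 1 / (2 * (1 - δ) * t) := by
  obtain ⟨hδ0, hδ1⟩ := hδ
  obtain ⟨c, hcdef⟩ : ∃ c : ℝ, c = 1 - δ := ⟨_, rfl⟩
  rw [show (2:ℝ) * (1 - δ) = 2 * c by rw [hcdef]]
  have hc : 0 < c := by rw [hcdef]; linarith
  have hc1 : c < 1 := by rw [hcdef]; linarith
  have h2c : 0 < 2*c := by linarith
  have hposx : ∀ x : ℝ, 1 ≤ x → 0 < 1/(2*c*x) := by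
    intro x hx
    apply one_div_pos.mpr
    nlinarith
  -- derivative of the inverse part
  have hinv : ∀ x : ℝ, 1 ≤ x → HasDerivAt (fun t : ℝ => 1/(2*c*t)) (-(2*c)/(2*c*x)^2) x := by
    intro x hx
    have h1 : HasDerivAt (fun t : ℝ => 2*c*t) (2*c) x := by
      simpa using (hasDerivAt_id x).const_mul (2*c)
    have h2 := h1.inv (by nlinarith : 2*c*x ≠ 0)
    exact h2.congr_of_eventuallyEq (Filter.Eventually.of_forall fun t => by
      show 1/(2*c*t) = (2*c*t)⁻¹; rw [one_div])
  have hderU : ∀ x : ℝ, 1 ≤ x → HasDerivAt (fun t : ℝ => t + 1/(2*c*t)) (1 + -(2*c)/(2*c*x)^2) x :=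
    fun x hx => (hasDerivAt_id x).add (hinv x hx)
  have hderL : ∀ x : ℝ, 1 ≤ x → HasDerivAt (fun t : ℝ => t - 1/(2*c*t)) (1 - -(2*c)/(2*c*x)^2) x :=
    fun x hx => (hasDerivAt_id x).sub (hinv x hx)
  -- thresholds
  obtain ⟨D, hDdef⟩ : ∃ D : ℝ, D = 1/(2*c) := ⟨_, rfl⟩
  have hD : 0 < D := by rw [hDdef]; positivity
  obtain ⟨A, hAdef⟩ : ∃ A : ℝ, A = (D + 1)/δ := ⟨_, rfl⟩
  have hA : 0 < A := by rw [hAdef]; positivity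
  obtain ⟨Tδ, hTδdef⟩ : ∃ Tδ : ℝ, Tδ = max T (A + 1) := ⟨_, rfl⟩
  have hTδT : T ≤ Tδ := hTδdef ▸ le_max_left _ _
  have hTδA : A + 1 ≤ Tδ := hTδdef ▸ le_max_right _ _
  have hTδ1 : 1 ≤ Tδ := le_trans hT1 hTδT
  have hTδt₀ : t₀ ≤ Tδ := le_trans hTt₀ hTδT
  -- smallness estimates for x ≥ Tδ
  have hsmall : ∀ x : ℝ, Tδ ≤ x → 1/(4*c^2*x^2) + 1/(2*c*x^2) ≤ δ/(2*c) := by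
    intro x hx
    have hx1 : 1 ≤ x := le_trans hTδ1 hx
    have hxA : A ≤ x := by linarith
    have hx0 : 0 < x := by linarith
    have e1 : 1/(4*c^2*x^2) + 1/(2*c*x^2) = D*(D+1)/x^2 := by
      rw [hDdef]; field_simp; ring
    rw [e1]
    have e2 : D*(D+1)/x^2 ≤ D*(D+1)/x :=
      div_le_div_of_nonneg_left (by positivity) hx0 (by nlinarith)
    have e3 : D*(D+1)/x ≤ D*(D+1)/A :=
      div_le_div_of_nonneg_left (by positivity) hA hxA
    have e4 : D*(D+1)/A = D*δ := by
      rw [hAdef, div_div_eq_mul_div, show D*(D+1)*δ = D*δ*(D+1) by ring, mul_div_assoc,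
        div_self (ne_of_gt (by linarith : (0:ℝ) < D + 1)), mul_one]
    have e5 : D*δ = δ/(2*c) := by rw [hDdef]; ring
    linarith
  have hquarter : ∀ x : ℝ, Tδ ≤ x → 1/(4*c^2*x^2) ≤ δ/(2*c) := by
    intro x hx
    have hx1 : 1 ≤ x := le_trans hTδ1 hx
    have hx0 : 0 < x := by linarith
    have h1 : 0 < 1/(2*c*x^2) := by positivity
    linarith [hsmall x hx]
  -- Part A1: find s with y s ≤ s + 1/(2cs)
  have partA1 : ∃ s ≥ Tδ, y s ≤ s + 1/(2*c*s) := by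
    by_contra hcon
    push_neg at hcon
    have hdec : ∀ t ∈ Set.Ici Tδ, y t ≤ (fun t => y Tδ - (t - Tδ)) t := by
      apply fence_le (f' := fun x => x^2 - (y x)^2) (B' := fun _ => (-1:ℝ))
        (fun x hx => hy x (le_trans hTδt₀ hx))
        (fun x _ => by simpa using ((hasDerivAt_id x).sub_const Tδ).const_sub (y Tδ))
      · simp
      · intro x hx
        simp only [mem_Ici] at hx
        have hx1 : 1 ≤ x := le_trans hTδ1 hx
        have hux : x + 1/(2*c*x) < y x := hcon x hx
        have hu0 : 0 < 1/(2*c*x) := hposx x hx1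
        have h2xu : 2*x*(1/(2*c*x)) = 1/c := by field_simp
        have h1c : 1 ≤ 1/c := by rw [le_div_iff₀ hc]; linarith
        have hsq : (x + 1/(2*c*x))^2 ≤ (y x)^2 :=
          pow_le_pow_left₀ (by linarith) hux.le 2
        have hexp : x^2 - (x + 1/(2*c*x))^2 = -(2*x*(1/(2*c*x))) - (1/(2*c*x))^2 := by ring
        rw [h2xu] at hexp
        show x^2 - (y x)^2 ≤ -1
        linarith [sq_nonneg (1/(2*c*x))]
    exfalso
    have hu0 : 0 < 1/(2*c*Tδ) := hposx Tδ hTδ1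
    have hyTδ : Tδ < y Tδ := by linarith [hcon Tδ (le_refl Tδ)]
    have htstar : Tδ ≤ Tδ + y Tδ := by linarith
    have h1 : y (Tδ + y Tδ) ≤ y Tδ - ((Tδ + y Tδ) - Tδ) := hdec (Tδ + y Tδ) htstar
    have h2 := hcon (Tδ + y Tδ) htstar
    have hu1 : 0 < 1/(2*c*(Tδ + y Tδ)) := hposx _ (by linarith)
    linarith
  obtain ⟨s, hsTδ, hsy⟩ := partA1
  have hs1 : 1 ≤ s := le_trans hTδ1 hsTδ
  -- Part A2: fence y below the upper barrier from s on
  have partA2 : ∀ t ≥ s, y t ≤ t + 1/(2*c*t) := by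
    intro t ht
    refine fence_lt (f' := fun x => x^2 - (y x)^2)
      (B' := fun x => 1 + -(2*c)/(2*c*x)^2)
      (fun x hx => hy x (le_trans (le_trans hTδt₀ hsTδ) hx))
      (fun x hx => hderU x (le_trans hs1 hx))
      hsy
      ?_ t ht
    intro x hx hcontact
    simp only [mem_Ici] at hx
    have hx1 : 1 ≤ x := le_trans hs1 hx
    have hx0 : 0 < x := by linarith
    show x^2 - (y x)^2 < 1 + -(2*c)/(2*c*x)^2
    have hcx : y x = x + 1/(2*c*x) := hcontact
    rw [hcx]
    have h1 : x^2 - (x + 1/(2*c*x))^2 = -(1/c) - 1/(4*c^2*x^2) := by field_simp; ring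
    have h2 : (1:ℝ) + -(2*c)/(2*c*x)^2 = 1 - 1/(2*c*x^2) := by field_simp; ring
    rw [h1, h2]
    have hx2 : 2*c ≤ 2*c*x^2 := by
      nlinarith [mul_nonneg (mul_nonneg h2c.le (sub_nonneg.mpr hx1))
        (show (0:ℝ) ≤ x + 1 by linarith)]
    have h3 : 1/(2*c*x^2) ≤ 1/(2*c) :=
      div_le_div_of_nonneg_left (by norm_num) h2c hx2
    have h4 : 1/(2*c) = (1/c)/2 := by ring
    have h5 : 0 < 1/c := by positivity
    have h6 : 0 ≤ 1/(4*c^2*x^2) := by positivity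
    linarith
  -- Part B1: find s' with y s' ≥ s' - 1/(2cs')
  have partB1 : ∃ s' ≥ Tδ, s' - 1/(2*c*s') ≤ y s' := by
    by_contra hcon
    push_neg at hcon
    have hmono : ∀ t ∈ Set.Ici Tδ, (fun _ => y Tδ) t ≤ y t := by
      apply fence_le (f' := fun _ => (0:ℝ)) (B' := fun x => x^2 - (y x)^2)
        (fun x _ => hasDerivAt_const x (y Tδ))
        (fun x hx => hy x (le_trans hTδt₀ hx))
        (le_refl _)
      intro x hx
      simp only [mem_Ici] at hx
      have hx1 : 1 ≤ x := le_trans hTδ1 hx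
      have hlow : -x ≤ y x := hTy x (le_trans hTδT hx)
      have hup : y x < x - 1/(2*c*x) := hcon x hx
      have hu0 : 0 < 1/(2*c*x) := hposx x hx1
      show (0:ℝ) ≤ x^2 - (y x)^2
      have := sq_le_sq' (by linarith : -x ≤ y x) (by linarith : y x ≤ x)
      linarith
    obtain ⟨m, hmdef⟩ : ∃ m : ℝ, m = y Tδ := ⟨_, rfl⟩
    obtain ⟨T₅, hT₅def⟩ : ∃ T₅ : ℝ, T₅ = Tδ + |m| + 2 := ⟨_, rfl⟩
    have habs : 0 ≤ |m| := abs_nonneg m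
    have hT₅Tδ : Tδ ≤ T₅ := by rw [hT₅def]; linarith
    have hT₅1 : 1 ≤ T₅ := le_trans hTδ1 hT₅Tδ
    obtain ⟨q, hqdef⟩ : ∃ q : ℝ, q = min 1 (δ/(2*c)) := ⟨_, rfl⟩
    have hq0 : 0 < q := by
      rw [hqdef]
      exact lt_min (by norm_num) (div_pos hδ0 h2c)
    have hq1 : q ≤ 1 := hqdef ▸ min_le_left _ _
    have hq2 : q ≤ δ/(2*c) := hqdef ▸ min_le_right _ _
    have hrate : ∀ x ∈ Set.Ici T₅, q ≤ x^2 - (y x)^2 - 1 := by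
      intro x hx
      simp only [mem_Ici] at hx
      have hxTδ : Tδ ≤ x := le_trans hT₅Tδ hx
      have hx1 : 1 ≤ x := le_trans hTδ1 hxTδ
      have hxm : Tδ + |m| + 2 ≤ x := hT₅def ▸ hx
      have hym : m ≤ y x := hmdef ▸ hmono x hxTδ
      have hup : y x < x - 1/(2*c*x) := hcon x hxTδ
      have hu0 : 0 < 1/(2*c*x) := hposx x hx1
      rcases le_or_gt (y x) 0 with hneg | hpos
      · have hsq : (y x)^2 ≤ m^2 := by
          have h := sq_le_sq' (by linarith [neg_abs_le m] : -|m| ≤ y x)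
            (by linarith [abs_nonneg m] : y x ≤ |m|)
          rwa [sq_abs] at h
        have hxm2 : m^2 + 2 ≤ x^2 := by
          have h1 : |m| + 2 ≤ x := by linarith
          have h2 := mul_self_le_mul_self (by linarith [abs_nonneg m] : (0:ℝ) ≤ |m| + 2) h1
          nlinarith [sq_abs m, abs_nonneg m]
        linarith
      · have hsq : (y x)^2 ≤ (x - 1/(2*c*x))^2 :=
          sq_le_sq' (by linarith : -(x - 1/(2*c*x)) ≤ y x) hup.le
        have hexp : x^2 - (x - 1/(2*c*x))^2 = 1/c - 1/(4*c^2*x^2) := by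
          field_simp; ring
        have hq4 := hquarter x hxTδ
        have h1c : 1/c - 1 = δ/c := by
          rw [eq_div_iff (ne_of_gt hc), sub_mul, one_div_mul_cancel (ne_of_gt hc), one_mul,
            hcdef]; ring
        have hdc : δ/c = 2*(δ/(2*c)) := by ring
        linarith
    have hgrow : ∀ t ∈ Set.Ici T₅, (fun t => (y T₅ - T₅) + q*(t - T₅)) t ≤ (fun t => y t - t) t := by
      apply fence_le (f' := fun _ => q) (B' := fun x => (x^2 - (y x)^2) - 1)
        (fun x _ => by
          simpa using (((hasDerivAt_id x).sub_const T₅).const_mul q).const_add (y T₅ - T₅))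
        (fun x hx => by
          exact (hy x (le_trans hTδt₀ (le_trans hT₅Tδ hx))).sub (hasDerivAt_id' x))
        (by show (y T₅ - T₅) + q*(T₅ - T₅) ≤ y T₅ - T₅
            rw [sub_self, mul_zero, add_zero])
      intro x hx
      have := hrate x hx
      show q ≤ (x^2 - (y x)^2) - 1
      linarith
    obtain ⟨tbig, htbigdef⟩ : ∃ tb : ℝ, tb = T₅ + (|y T₅ - T₅| + 1)/q := ⟨_, rfl⟩
    have htbq : 0 ≤ (|y T₅ - T₅| + 1)/q :=
      div_nonneg (by positivity) hq0.le
    have htb1 : T₅ ≤ tbig := by rw [htbigdef]; linarith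
    have h1 : (y T₅ - T₅) + q*(tbig - T₅) ≤ y tbig - tbig := hgrow tbig htb1
    have h2 : q * (tbig - T₅) = |y T₅ - T₅| + 1 := by
      rw [htbigdef, add_sub_cancel_left]
      field_simp
    have htbig1 : 1 ≤ tbig := le_trans hT₅1 htb1
    have h3 : y tbig - tbig < 0 := by
      have hu1 : 0 < 1/(2*c*tbig) := hposx tbig htbig1
      linarith [hcon tbig (le_trans hT₅Tδ htb1)]
    have h5 : 0 ≤ (y T₅ - T₅) + |y T₅ - T₅| := by
      rcases abs_cases (y T₅ - T₅) with ⟨h, _⟩ | ⟨h, _⟩ <;> linarith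
    rw [h2] at h1
    linarith
  obtain ⟨s', hs'Tδ, hs'y⟩ := partB1
  have hs'1 : 1 ≤ s' := le_trans hTδ1 hs'Tδ
  -- Part B2: fence y above the lower barrier from s' on
  have partB2 : ∀ t ≥ s', t - 1/(2*c*t) ≤ y t := by
    intro t ht
    refine fence_lt (f' := fun x => 1 - -(2*c)/(2*c*x)^2)
      (B' := fun x => x^2 - (y x)^2)
      (fun x hx => hderL x (le_trans hs'1 hx))
      (fun x hx => hy x (le_trans (le_trans hTδt₀ hs'Tδ) hx))
      hs'y
      ?_ t ht
    intro x hx hcontact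
    simp only [mem_Ici] at hx
    have hxTδ : Tδ ≤ x := le_trans hs'Tδ hx
    have hx1 : 1 ≤ x := le_trans hs'1 hx
    have hcx : y x = x - 1/(2*c*x) := hcontact.symm
    show 1 - -(2*c)/(2*c*x)^2 < x^2 - (y x)^2
    rw [hcx]
    have h1 : x^2 - (x - 1/(2*c*x))^2 = 1/c - 1/(4*c^2*x^2) := by field_simp; ring
    have h2 : (1:ℝ) - -(2*c)/(2*c*x)^2 = 1 + 1/(2*c*x^2) := by field_simp; ring
    rw [h1, h2]
    have h3 := hsmall x hxTδ
    have h1c : 1/c - 1 = δ/c := by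
          rw [eq_div_iff (ne_of_gt hc), sub_mul, one_div_mul_cancel (ne_of_gt hc), one_mul,
            hcdef]; ring
    have hdc : δ/c = 2*(δ/(2*c)) := by ring
    have hpos : 0 < δ/(2*c) := div_pos hδ0 h2c
    linarith
  -- conclusion
  refine ⟨max s s', le_trans hTδt₀ (le_trans hsTδ (le_max_left _ _)), ?_⟩
  intro t ht
  have hts : s ≤ t := le_trans (le_max_left _ _) ht
  have hts' : s' ≤ t := le_trans (le_max_right _ _) ht
  have hU := partA2 t hts
  have hL := partB2 t hts'
  rw [abs_le]
  constructor <;> linarith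

/-- Solutions of `y' = t² − y²` starting above the critical solution `y*` are asymptotic to
the line `y = t`: for every `δ ∈ (0,1)` eventually `|y(t) − t| ≤ 1/(2(1−δ)t)`. -/
theorem stmt_8 (t₀ y₀ : ℝ) (ht₀ : 0 ≤ t₀) (ystar : ℝ → ℝ)
    (hstar : ∀ t ∈ Set.Ici (0 : ℝ), HasDerivAt ystar (t ^ 2 - (ystar t) ^ 2) t)
    (hbound : ∀ t ∈ Set.Ici (0 : ℝ), ystar t < -t ∧ -Real.sqrt (t ^ 2 + 1) < ystar t)
    (y : ℝ → ℝ) (hy₀ : y t₀ = y₀) (habove : ystar t₀ < y₀)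
    (hy : ∀ t ∈ Set.Ici t₀, HasDerivAt y (t ^ 2 - (y t) ^ 2) t) :
    ∀ δ ∈ Set.Ioo (0 : ℝ) 1, ∃ tδ ≥ t₀, ∀ t ≥ tδ, |y t - t| ≤ 1 / (2 * (1 - δ) * t) := by
  have hcomp : ∀ t ∈ Set.Ici t₀, ystar t < y t :=
    step_comparison t₀ ht₀ ystar y hstar hy (by rw [hy₀]; exact habove)
  obtain ⟨T, ⟨hTt₀, hT1⟩, hTy⟩ := step_cross t₀ ht₀ ystar y hstar hbound hy hcomp
  intro δ hδ
  exact step_final t₀ T y hy hTt₀ hT1 hTy δ hδ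
end

section
/- Let y⁺ be the solution of y' = t² − y² with |y⁺(t) + t| → 0 as t → −∞. Then y⁺(t) ≥ −t for all t < 0, inf_{t∈ℝ} y⁺(t) > 0, and y⁺(t) ≥ t − 1/t for all sufficiently large t > 0. -/
open Filter Set Topology


lemma posLem (f F : ℝ → ℝ) (a b : ℝ)
    (hf : ∀ t ∈ Set.Icc a b, HasDerivAt f (F t) t)
    (hF : ∀ t ∈ Set.Icc a b, f t = 0 → 0 < F t)
    (ha : 0 ≤ f a) : ∀ t ∈ Set.Icc a b, 0 ≤ f t := by
  by_contra hcon
  push_neg at hcon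
  obtain ⟨c, hcab, hfc⟩ := hcon
  have hac : a ≤ c := hcab.1
  have hsub : Set.Icc a c ⊆ Set.Icc a b := Set.Icc_subset_Icc_right hcab.2
  set S : Set ℝ := {t | t ∈ Set.Icc a c ∧ 0 ≤ f t} with hSdef
  have hane : a ∈ S := ⟨⟨le_refl a, hac⟩, ha⟩
  have hSne : S.Nonempty := ⟨a, hane⟩
  have hSbdd : BddAbove S := ⟨c, fun t ht => ht.1.2⟩
  set s := sSup S with hsdef
  have hscl : s ∈ closure S := csSup_mem_closure hSne hSbdd
  have hsIcc : s ∈ Set.Icc a c := by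
    have h : closure S ⊆ Set.Icc a c := closure_minimal (fun t ht => ht.1) isClosed_Icc
    exact h hscl
  have hsab : s ∈ Set.Icc a b := hsub hsIcc
  have hconts : ContinuousAt f s := (hf s hsab).continuousAt
  have hfs : 0 ≤ f s := by
    have h1 : Tendsto f (𝓝[S] s) (𝓝 (f s)) := hconts.continuousWithinAt.tendsto
    have h2 : (𝓝[S] s).NeBot := mem_closure_iff_nhdsWithin_neBot.mp hscl
    exact ge_of_tendsto h1 (eventually_nhdsWithin_of_forall fun t ht => ht.2)
  have hsc : s < c := lt_of_le_of_ne hsIcc.2 (fun h => by rw [h] at hfs; linarith)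
  have hkey : ∀ t, s < t → t ≤ c → f t < 0 := by
    intro t hst htc
    by_contra hge
    push_neg at hge
    have htS : t ∈ S := ⟨⟨le_trans hsIcc.1 hst.le, htc⟩, hge⟩
    exact absurd (le_csSup hSbdd htS) (not_le.mpr hst)
  have hfs0 : f s = 0 := by
    refine le_antisymm ?_ hfs
    have h1 : Tendsto f (𝓝[>] s) (𝓝 (f s)) := hconts.continuousWithinAt.tendsto
    have h2 : ∀ᶠ t in 𝓝[>] s, f t ≤ 0 := by
      filter_upwards [Ioo_mem_nhdsGT_of_mem ⟨le_refl s, hsc⟩] with t ht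
      exact (hkey t ht.1 ht.2.le).le
    exact le_of_tendsto h1 h2
  have hFs : 0 < F s := hF s hsab hfs0
  have hslope : Tendsto (slope f s) (𝓝[≠] s) (𝓝 (F s)) :=
    hasDerivAt_iff_tendsto_slope.mp (hf s hsab)
  have hslope' : Tendsto (slope f s) (𝓝[>] s) (𝓝 (F s)) :=
    hslope.mono_left (nhdsWithin_mono s fun t ht => ne_of_gt ht)
  have hev : ∀ᶠ t in 𝓝[>] s, 0 < slope f s t :=
    hslope'.eventually (eventually_gt_nhds hFs)
  have hev2 : ∀ᶠ t in 𝓝[>] s, t ∈ Set.Ioo s c := Ioo_mem_nhdsGT_of_mem ⟨le_refl s, hsc⟩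
  obtain ⟨t, h1, h2⟩ := (hev.and hev2).exists
  have hts : 0 < t - s := sub_pos.mpr h2.1
  have hmul := mul_pos h1 hts
  rw [slope_def_field, div_mul_cancel₀ _ (ne_of_gt hts)] at hmul
  have := hkey t h2.1 h2.2.le
  linarith

lemma negLem (f F : ℝ → ℝ) (a b : ℝ)
    (hf : ∀ t ∈ Set.Icc a b, HasDerivAt f (F t) t)
    (hF : ∀ t ∈ Set.Icc a b, f t = 0 → F t < 0)
    (hb : 0 ≤ f b) : ∀ t ∈ Set.Icc a b, 0 ≤ f t := by
  have key := posLem (fun t => f (-t)) (fun t => -F (-t)) (-b) (-a)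
    (fun t ht => by
      have h1 : -t ∈ Set.Icc a b := ⟨by linarith [ht.2], by linarith [ht.1]⟩
      have h2 := (hf (-t) h1).comp t (hasDerivAt_neg t)
      simpa [mul_comm, Function.comp_def] using h2)
    (fun t ht h0 => by
      have h1 : -t ∈ Set.Icc a b := ⟨by linarith [ht.2], by linarith [ht.1]⟩
      exact neg_pos.mpr (hF (-t) h1 h0))
    (by simpa using hb)
  intro t ht
  have := key (-t) ⟨by linarith [ht.2], by linarith [ht.1]⟩
  simpa using this

section main
variable (yplus : ℝ → ℝ)
  (hode : ∀ t : ℝ, HasDerivAt yplus (t ^ 2 - (yplus t) ^ 2) t)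
  (hasym : Tendsto (fun t => yplus t + t) atBot (nhds 0))

include hode hasym in
lemma part1 : ∀ t < (0 : ℝ), -t ≤ yplus t := by
  by_contra hcon
  push_neg at hcon
  obtain ⟨t₀, ht₀, hy₀⟩ := hcon
  set w : ℝ → ℝ := fun t => yplus t + t with hw
  have hwd : ∀ t : ℝ, HasDerivAt w (t ^ 2 - (yplus t) ^ 2 + 1) t := by
    intro t
    exact (hode t).add (hasDerivAt_id' t)
  have hc : w t₀ < 0 := by simp [hw]; linarith
  set l : ℝ := max (w t₀ / 2) (-1/2) with hl
  have hl0 : l < 0 := by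
    apply max_lt <;> linarith
  have hll : -1/2 ≤ l := le_max_right _ _
  have hcl : w t₀ ≤ l := le_trans (by linarith) (le_max_left _ _)
  -- find t₁ ≤ t₀ with l < w t₁
  have hev1 : ∀ᶠ t in atBot, l < w t := hasym.eventually (eventually_gt_nhds hl0)
  have hev2 : ∀ᶠ t in atBot, t ≤ t₀ := eventually_le_atBot t₀
  obtain ⟨t₁, h1, h2⟩ := (hev1.and hev2).exists
  -- apply negLem on [t₁, t₀] with f = l - w
  have key := negLem (fun t => l - w t) (fun t => -(t ^ 2 - (yplus t) ^ 2 + 1)) t₁ t₀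
    (fun t ht => (hwd t).const_sub l)
    (fun t ht h0 => by
      -- w t = l, t ≤ t₀ < 0
      have h0' : l - w t = 0 := h0
      have hwt : w t = l := by linarith
      have hyt : yplus t = l - t := by
        have : yplus t + t = l := hwt
        linarith
      have ht0 : t < 0 := lt_of_le_of_lt ht.2 ht₀
      rw [hyt]
      have h2tl : 0 < 2 * t * l := by
        have := mul_pos_of_neg_of_neg ht0 hl0
        nlinarith
      nlinarith [sq_nonneg l, hll, hl0]
      )
    (by simp; linarith)
  have := key t₁ ⟨le_refl _, h2⟩
  simp at this
  linarith


include hode hasym in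
lemma ypos : ∀ t : ℝ, 0 < yplus t := by
  have h1 := part1 yplus hode hasym
  have hcont : Continuous yplus :=
    continuous_iff_continuousAt.mpr fun t => (hode t).continuousAt
  have hy0 : 0 ≤ yplus 0 := by
    have htd : Tendsto (fun t => yplus t + t) (𝓝[<] (0:ℝ)) (𝓝 (yplus 0 + 0)) :=
      ((hcont.continuousAt.add continuousAt_id).continuousWithinAt).tendsto
    have hev : ∀ᶠ t in 𝓝[<] (0:ℝ), 0 ≤ yplus t + t := by
      filter_upwards [self_mem_nhdsWithin] with t ht
      have := h1 t ht
      linarith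
    have := ge_of_tendsto htd hev
    linarith
  have hy0pos : 0 < yplus 0 := by
    rcases lt_or_eq_of_le hy0 with h | h
    · exact h
    · exfalso
      have hwd : HasDerivAt (fun t => yplus t + t) ((0:ℝ) ^ 2 - (yplus 0) ^ 2 + 1) 0 := by
        exact (hode 0).add (hasDerivAt_id' 0)
      have hd1 : ((0:ℝ) ^ 2 - (yplus 0) ^ 2 + 1) = 1 := by rw [← h]; ring
      rw [hd1] at hwd
      have hslope : Tendsto (slope (fun t => yplus t + t) 0) (𝓝[≠] (0:ℝ)) (𝓝 1) :=
        hasDerivAt_iff_tendsto_slope.mp hwd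
      have hslope' : Tendsto (slope (fun t => yplus t + t) 0) (𝓝[<] (0:ℝ)) (𝓝 1) :=
        hslope.mono_left (nhdsWithin_mono 0 fun t ht => ne_of_lt ht)
      have hev : ∀ᶠ t in 𝓝[<] (0:ℝ), 0 < slope (fun t => yplus t + t) 0 t :=
        hslope'.eventually (eventually_gt_nhds one_pos)
      have hev2 : ∀ᶠ t in 𝓝[<] (0:ℝ), t < 0 := self_mem_nhdsWithin
      obtain ⟨t, hs, ht⟩ := (hev.and hev2).exists
      rw [slope_def_field] at hs
      have hw0 : yplus 0 + 0 = 0 := by rw [← h]; ring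
      rw [hw0] at hs
      have hts : t - 0 < 0 := by linarith
      have : yplus t + t - 0 < 0 := by
        by_contra hge
        push_neg at hge
        have := div_nonpos_of_nonneg_of_nonpos hge hts.le
        linarith
      have := h1 t ht
      linarith
  intro t
  rcases lt_trichotomy t 0 with ht | ht | ht
  · have := h1 t ht; linarith
  · rw [ht]; exact hy0pos
  · -- t > 0
    by_contra hle
    push_neg at hle
    have hall : ∀ a ∈ Set.Ioc (0:ℝ) t, yplus a ≤ 0 := by
      intro a ha
      have key := negLem (fun s => -yplus s) (fun s => -(s ^ 2 - (yplus s) ^ 2)) a t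
        (fun s hs => (hode s).neg)
        (fun s hs h0 => by
          have hy : yplus s = 0 := by
            have h0' : -yplus s = 0 := h0
            linarith
          have hs0 : 0 < s := lt_of_lt_of_le ha.1 hs.1
          rw [hy]
          nlinarith)
        (by simp; linarith)
      have := key a ⟨le_refl _, ha.2⟩
      simp at this
      linarith
    have htd : Tendsto yplus (𝓝[>] (0:ℝ)) (𝓝 (yplus 0)) :=
      hcont.continuousAt.continuousWithinAt.tendsto
    have hev : ∀ᶠ a in 𝓝[>] (0:ℝ), yplus a ≤ 0 := by
      filter_upwards [Ioo_mem_nhdsGT_of_mem ⟨le_refl (0:ℝ), ht⟩] with a ha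
      exact hall a ⟨ha.1, ha.2.le⟩
    have := le_of_tendsto htd hev
    linarith


include hode hasym in
lemma part3 : ∃ T : ℝ, 2 ≤ T ∧ ∀ t ≥ T, t - 1 / t ≤ yplus t := by
  have hpos := ypos yplus hode hasym
  have hcont : Continuous yplus :=
    continuous_iff_continuousAt.mpr fun t => (hode t).continuousAt
  -- Step 1: find T₀ ≥ 2 with yplus T₀ ≥ T₀ - T₀⁻¹
  have hex : ∃ T₀ : ℝ, 2 ≤ T₀ ∧ T₀ - T₀⁻¹ ≤ yplus T₀ := by
    by_contra hcon
    push_neg at hcon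
    have hc : ∀ T : ℝ, 2 ≤ T → yplus T < T - T⁻¹ := fun T hT => hcon T hT
    set φ : ℝ → ℝ := fun t => 3/2 * t - t⁻¹ - yplus t with hφ
    have hφd : ∀ t : ℝ, t ≠ 0 →
        HasDerivAt φ (3/2 + (t ^ 2)⁻¹ - (t ^ 2 - (yplus t) ^ 2)) t := by
      intro t ht
      have h1 : HasDerivAt (fun t : ℝ => 3/2 * t) (3/2) t := by
        simpa using (hasDerivAt_id t).const_mul (3/2 : ℝ)
      have h2 := hasDerivAt_inv ht
      have := (h1.sub h2).sub (hode t)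
      exact this.congr_deriv (by ring)
    set b : ℝ := max 2 (5 - 2 * yplus 2) with hb
    have hb2 : (2:ℝ) ≤ b := le_max_left _ _
    have hanti : AntitoneOn φ (Set.Icc 2 b) := by
      apply antitoneOn_of_deriv_nonpos (convex_Icc 2 b)
      · intro t ht
        have ht0 : t ≠ 0 := by have := ht.1; intro h; rw [h] at this; linarith
        exact (hφd t ht0).continuousAt.continuousWithinAt
      · intro t ht
        rw [interior_Icc] at ht
        have ht0 : t ≠ 0 := by have := ht.1; intro h; rw [h] at this; linarith
        exact ((hφd t ht0).differentiableAt).differentiableWithinAt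
      · intro t ht
        rw [interior_Icc] at ht
        have ht2 : 2 < t := ht.1
        have ht0 : t ≠ 0 := by intro h; rw [h] at ht2; linarith
        rw [(hφd t ht0).deriv]
        have hy := hpos t
        have hlt := hc t ht2.le
        have hu : t * t⁻¹ = 1 := mul_inv_cancel₀ ht0
        have hup : 0 < t⁻¹ := inv_pos.mpr (by linarith)
        have hu2 : t⁻¹ ≤ 1/2 := by
          rw [inv_le_comm₀ (by linarith) (by norm_num)]
          linarith
        have hinv : (t ^ 2)⁻¹ = t⁻¹ ^ 2 := (inv_pow t 2).symm
        rw [hinv]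
        nlinarith [sq_nonneg (t - t⁻¹ - yplus t), sq_nonneg t⁻¹, hy, hlt, hu, hu2]
    have hmono := hanti (Set.left_mem_Icc.mpr hb2) (Set.right_mem_Icc.mpr hb2) hb2
    -- φ 2 ≥ φ b, derive contradiction
    have hcb := hc b (by linarith)
    have hy2 := hpos 2
    have h5 : (5:ℝ) - 2 * yplus 2 ≤ b := le_max_right _ _
    have hφ2 : φ 2 = 3 - 2⁻¹ - yplus 2 := by simp only [hφ]; ring
    have hφb : φ b = 3/2 * b - b⁻¹ - yplus b := rfl
    rw [hφ2, hφb] at hmono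
    -- yplus b < b - b⁻¹ so 3/2*b - b⁻¹ - yplus b > b/2
    have : b / 2 < 3 - 2⁻¹ - yplus 2 := by linarith
    norm_num at this
    linarith
  obtain ⟨T₀, hT₀2, hT₀⟩ := hex
  refine ⟨T₀, hT₀2, ?_⟩
  intro t htT
  have key := posLem (fun s => yplus s - s + s⁻¹)
    (fun s => s ^ 2 - (yplus s) ^ 2 - 1 + -(s ^ 2)⁻¹) T₀ t
    (fun s hs => by
      have hs0 : s ≠ 0 := by have := hs.1; intro h; rw [h] at this; linarith
      exact ((hode s).sub (hasDerivAt_id s)).add (hasDerivAt_inv hs0))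
    (fun s hs h0 => by
      have hs2 : 2 ≤ s := le_trans hT₀2 hs.1
      have hs0 : s ≠ 0 := by intro h; rw [h] at hs2; linarith
      have hy : yplus s = s - s⁻¹ := by
        have h0' : yplus s - s + s⁻¹ = 0 := h0
        linarith
      rw [hy]
      have hu : s * s⁻¹ = 1 := mul_inv_cancel₀ hs0
      have hup : 0 < s⁻¹ := inv_pos.mpr (by linarith)
      have hu2 : s⁻¹ ≤ 1/2 := by
        rw [inv_le_comm₀ (by linarith) (by norm_num)]
        linarith
      have hinv : (s ^ 2)⁻¹ = s⁻¹ ^ 2 := (inv_pow s 2).symm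
      rw [hinv]
      nlinarith [sq_nonneg s⁻¹, hu, hu2])
    (by linarith)
  have := key t ⟨htT, le_refl t⟩
  rw [one_div]
  linarith


include hode hasym in
lemma part2 : ∃ c > 0, ∀ t : ℝ, c ≤ yplus t := by
  have h1 := part1 yplus hode hasym
  have hpos := ypos yplus hode hasym
  obtain ⟨T, hT2, hT⟩ := part3 yplus hode hasym
  have hcont : Continuous yplus :=
    continuous_iff_continuousAt.mpr fun t => (hode t).continuousAt
  have hne : (Set.Icc (-1:ℝ) T).Nonempty := ⟨0, by constructor <;> linarith⟩
  obtain ⟨p, hp, hmin'⟩ := isCompact_Icc.exists_isMinOn hne hcont.continuousOn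
  have hmin : ∀ q ∈ Set.Icc (-1:ℝ) T, yplus p ≤ yplus q := fun q hq => hmin' hq
  refine ⟨min (yplus p) 1, lt_min (hpos p) one_pos, ?_⟩
  intro t
  rcases le_total t (-1) with ht | ht
  · have ha := h1 t (by linarith)
    have hb : (1:ℝ) ≤ yplus t := by linarith
    exact le_trans (min_le_right _ _) hb
  · rcases le_total t T with h2 | h2
    · exact le_trans (min_le_left _ _) (hmin t ⟨ht, h2⟩)
    · have hy := hT t h2
      have ht2 : (2:ℝ) ≤ t := by linarith
      have hinv : 1 / t ≤ 1/2 := one_div_le_one_div_of_le (by norm_num) ht2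
      have hb : (1:ℝ) ≤ yplus t := by linarith
      exact le_trans (min_le_right _ _) hb

end main

/-- Properties of the solution `y⁺` of `y' = t² − y²` asymptotic to `−t` as `t → −∞`:
`y⁺(t) ≥ −t` for `t < 0`, `inf y⁺ > 0`, and `y⁺(t) ≥ t − 1/t` for large `t`. -/
theorem stmt_15 (yplus : ℝ → ℝ)
    (hode : ∀ t : ℝ, HasDerivAt yplus (t ^ 2 - (yplus t) ^ 2) t)
    (hasym : Tendsto (fun t => yplus t + t) atBot (nhds 0)) :
    (∀ t < (0 : ℝ), -t ≤ yplus t) ∧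
    (∃ c > 0, ∀ t : ℝ, c ≤ yplus t) ∧
    (∃ T : ℝ, ∀ t ≥ T, t - 1 / t ≤ yplus t) := by
  obtain ⟨T, _, hT⟩ := part3 yplus hode hasym
  exact ⟨part1 yplus hode hasym, part2 yplus hode hasym, T, hT⟩
end
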